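/- arXiv:1205.4183 — 6 statements merged into one kernel-verified Lean document; each statement's English description precedes it below -/
import Mathlib

section
/- (Theorem 2.1, estimate (3.2), conditional form.) Fix an integer k ≥ 0. Assume there exist constants c_1, c_2, c_3, c_4 ≥ 0 and ω ∈ (0,2) such that: (i) for all n ≥ 1, α_n := 1 − (n+1)·γ^{2(n+1)}/(π·λ_n²) satisfies 0 ≤ α_n ≤ c_1/n; (ii) |⟨p_l, G_m⟩| ≤ c_2/m whenever m > l ≥ 0; (iii) for all n ≥ k+1, |⟨z·q_{n−1}, p_{n−k}⟩| ≤ c_3/n, where q_{n−1} := G_n − (γ^{n+1}/λ_n)·p_n; (iv) |b_j| ≤ c_4/j^{1+ω} for all j ≥ 1. Then there exists a constant C (depending only on k, ω and c_1,…,c_4) such that for all n ≥ k+1, |√((n−k+1)/(n+1))·⟨z·p_n, p_{n−k}⟩ − b_k| ≤ C/√n. -/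
open MeasureTheory Polynomial

set_option maxHeartbeats 1600000

lemma poly_integrable_aux (G : Set ℂ) (hGb : Bornology.IsBounded G)
    (f g : Polynomial ℂ) :
    IntegrableOn (fun z => f.eval z * (starRingEnd ℂ) (g.eval z)) G := by
  have hc : Continuous fun z : ℂ => f.eval z * (starRingEnd ℂ) (g.eval z) :=
    f.continuous.mul (continuous_star.comp g.continuous)
  exact (hc.continuousOn.integrableOn_compact hGb.isCompact_closure).mono_set subset_closure

section Main
variable (G : Set ℂ) (hGb : Bornology.IsBounded G)

noncomputable def ip (f g : Polynomial ℂ) : ℂ := ∫ z in G, f.eval z * (starRingEnd ℂ) (g.eval z)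

include hGb in
lemma ip_add (f₁ f₂ g : Polynomial ℂ) : ip G (f₁ + f₂) g = ip G f₁ g + ip G f₂ g := by
  unfold ip
  rw [← integral_add (poly_integrable_aux G hGb f₁ g) (poly_integrable_aux G hGb f₂ g)]
  congr 1; ext z; simp [add_mul]

lemma ip_smul (c : ℂ) (f g : Polynomial ℂ) : ip G (C c * f) g = c * ip G f g := by
  unfold ip
  rw [← integral_const_mul]
  congr 1; ext z; simp [mul_assoc]

lemma ip_zero (g : Polynomial ℂ) : ip G 0 g = 0 := by unfold ip; simp

include hGb in
lemma ip_sum (s : Finset ℕ) (F : ℕ → Polynomial ℂ) (g : Polynomial ℂ) :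
    ip G (∑ j ∈ s, F j) g = ∑ j ∈ s, ip G (F j) g := by
  classical
  induction s using Finset.induction_on with
  | empty => simp [ip_zero]
  | insert _ _ h ih => rw [Finset.sum_insert h, Finset.sum_insert h, ip_add G hGb, ih]

include hGb in
lemma ip_sub (f₁ f₂ g : Polynomial ℂ) : ip G (f₁ - f₂) g = ip G f₁ g - ip G f₂ g := by
  have h := ip_add G hGb (f₁ - f₂) f₂ g
  rw [sub_add_cancel] at h
  linear_combination -h

lemma ip_flip_abs (f g : Polynomial ℂ) : ‖(ip G f g)‖ = ‖(ip G g f)‖ := by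
  have : ip G f g = (starRingEnd ℂ) (ip G g f) := by
    unfold ip
    rw [← integral_conj]
    congr 1; ext z; simp [mul_comm]
  rw [this, Complex.norm_conj]

variable (p : ℕ → Polynomial ℂ) (lam : ℕ → ℝ)
    (hlam : ∀ n, 0 < lam n)
    (hdeg : ∀ n, (p n).degree = n)
    (hcoeff : ∀ n, (p n).coeff n = (lam n : ℂ))
    (horth : ∀ m n, ip G (p m) (p n) = if m = n then 1 else 0)

include hGb hlam hdeg hcoeff horth in
lemma ip_ortho (N : ℕ) : ∀ r : Polynomial ℂ, r.degree < (N : ℕ) → ip G r (p N) = 0 := by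
  suffices H : ∀ d : ℕ, ∀ r : Polynomial ℂ, r.natDegree ≤ d → r.degree < (N : ℕ) →
      ip G r (p N) = 0 by
    intro r hr; exact H r.natDegree r le_rfl hr
  intro d
  induction d using Nat.strong_induction_on with
  | _ d ih =>
    intro r hrd hrN
    by_cases h0 : r = 0
    · rw [h0]; exact ip_zero G _
    set m := r.natDegree with hm
    have hlamC : (lam m : ℂ) ≠ 0 := by exact_mod_cast (hlam m).ne'
    have hdegr : r.degree = (m : ℕ) := degree_eq_natDegree h0
    have hmN : m < N := by
      rw [hdegr] at hrN; exact_mod_cast hrN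
    set a : ℂ := r.coeff m / (lam m : ℂ) with ha
    have hr0 : r.coeff m ≠ 0 := by
      rw [hm, ← leadingCoeff]; exact leadingCoeff_ne_zero.mpr h0
    have ha0 : a ≠ 0 := div_ne_zero hr0 hlamC
    have hdegCa : (C a * p m).degree = (m : ℕ) := by rw [degree_C_mul ha0, hdeg]
    have hndCa : (C a * p m).natDegree = m := natDegree_eq_of_degree_eq_some hdegCa
    have hlc : r.leadingCoeff = (C a * p m).leadingCoeff := by
      rw [leadingCoeff, leadingCoeff, hndCa, ← hm, coeff_C_mul, hcoeff, ha]
      field_simp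
    have hsub : (r - C a * p m).degree < r.degree :=
      degree_sub_lt (hdegr.trans hdegCa.symm) h0 hlc
    have hIr' : ip G (r - C a * p m) (p N) = 0 := by
      by_cases h0' : r - C a * p m = 0
      · rw [h0']; exact ip_zero G _
      · have hlt : (r - C a * p m).natDegree < m := by
          have := natDegree_lt_natDegree h0' hsub
          rwa [← hm] at this
        exact ih _ (lt_of_lt_of_le hlt hrd) _ le_rfl
          (hsub.trans (hdegr ▸ hrN))
    have hsplit : r = (r - C a * p m) + C a * p m := by ring
    rw [hsplit, ip_add G hGb, hIr', ip_smul G, horth m N, if_neg hmN.ne, mul_zero, zero_add]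

end Main

section Expand
variable (G : Set ℂ) (hGb : Bornology.IsBounded G)
    (p : ℕ → Polynomial ℂ) (lam : ℕ → ℝ)
    (hlam : ∀ n, 0 < lam n)
    (hdeg : ∀ n, (p n).degree = n)
    (hcoeff : ∀ n, (p n).coeff n = (lam n : ℂ))
    (horth : ∀ m n, ip G (p m) (p n) = if m = n then 1 else 0)
    (γ : ℝ) (hγ : 0 < γ) (Gq : ℕ → Polynomial ℂ)
    (hGqdeg : ∀ n, (Gq n).degree = n)
    (hGqlead : ∀ n, (Gq n).coeff n = (γ : ℂ) ^ (n + 1))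

include hGb hlam hdeg hcoeff horth hγ hGqdeg hGqlead in
lemma ip_expand (M : ℕ) : ip G (Gq M) (p M) = (γ:ℂ)^(M+1) / (lam M : ℂ) := by
  have hγC : (γ:ℂ) ≠ 0 := by exact_mod_cast hγ.ne'
  have hlamC : (lam M : ℂ) ≠ 0 := by exact_mod_cast (hlam M).ne'
  set a : ℂ := (γ:ℂ)^(M+1) / (lam M : ℂ) with ha
  have ha0 : a ≠ 0 := div_ne_zero (pow_ne_zero _ hγC) hlamC
  have h1 : (C a * p M).degree = (M:ℕ) := by rw [degree_C_mul ha0, hdeg]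
  have hGq0' : Gq M ≠ 0 := by
    intro h
    have h2 := hGqdeg M
    rw [h, degree_zero] at h2
    exact absurd h2 (by simp)
  have hnd : (C a * p M).natDegree = M := natDegree_eq_of_degree_eq_some h1
  have hndG : (Gq M).natDegree = M := natDegree_eq_of_degree_eq_some (hGqdeg M)
  have hlc : (Gq M).leadingCoeff = (C a * p M).leadingCoeff := by
    rw [leadingCoeff, leadingCoeff, hnd, hndG, coeff_C_mul, hcoeff, hGqlead, ha]
    field_simp
  have hsub : (Gq M - C a * p M).degree < (M:ℕ) := by
    have := degree_sub_lt ((hGqdeg M).trans h1.symm) hGq0' hlc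
    rwa [hGqdeg M] at this
  have h2 : ip G (Gq M - C a * p M) (p M) = 0 :=
    ip_ortho G hGb p lam hlam hdeg hcoeff horth M _ hsub
  have h3 : Gq M = (Gq M - C a * p M) + C a * p M := by ring
  rw [h3, ip_add G hGb, h2, ip_smul G, horth M M, if_pos rfl, mul_one, zero_add]

end Expand

/-- Theorem 2.1, estimate (3.2), conditional form: under the stated
hypotheses (i)–(iv) there is a constant `C` such that for all `n ≥ k+1`,
`|√((n−k+1)/(n+1))·⟨z·p_n, p_{n−k}⟩ − b_k| ≤ C/√n`. -/
theorem diagonal_asymptotics_pw_analytic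
    (G : Set ℂ) (hG : G.Nonempty) (hGo : IsOpen G) (hGb : Bornology.IsBounded G)
    (p : ℕ → Polynomial ℂ) (lam : ℕ → ℝ)
    (hlam : ∀ n, 0 < lam n)
    (hdeg : ∀ n, (p n).degree = n)
    (hcoeff : ∀ n, (p n).coeff n = (lam n : ℂ))
    (horth : ∀ m n, (∫ z in G, (p m).eval z * (starRingEnd ℂ) ((p n).eval z)) =
      if m = n then 1 else 0)
    (γ : ℝ) (hγ : 0 < γ) (bs : ℕ → ℂ)
    (Gq : ℕ → Polynomial ℂ)
    (hGq0 : Gq 0 = Polynomial.C (γ : ℂ))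
    (hGqrec : ∀ n, Polynomial.X * Gq n =
      Polynomial.C ((γ : ℂ))⁻¹ * Gq (n + 1) +
        ∑ j ∈ Finset.range (n + 1), Polynomial.C (bs j) * Gq (n - j))
    (hGqdeg : ∀ n, (Gq n).degree = n)
    (hGqlead : ∀ n, (Gq n).coeff n = (γ : ℂ) ^ (n + 1))
    (k : ℕ)
    (c₁ c₂ c₃ c₄ ω : ℝ) (hc₁ : 0 ≤ c₁) (hc₂ : 0 ≤ c₂) (hc₃ : 0 ≤ c₃) (hc₄ : 0 ≤ c₄)
    (hω₀ : 0 < ω) (hω₂ : ω < 2)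
    -- (i)
    (hi : ∀ n : ℕ, 1 ≤ n →
      0 ≤ 1 - ((n : ℝ) + 1) * γ ^ (2 * (n + 1)) / (Real.pi * (lam n) ^ 2) ∧
      1 - ((n : ℝ) + 1) * γ ^ (2 * (n + 1)) / (Real.pi * (lam n) ^ 2) ≤ c₁ / n)
    -- (ii)
    (hii : ∀ l m : ℕ, l < m →
      ‖(∫ z in G, (p l).eval z * (starRingEnd ℂ) ((Gq m).eval z))‖ ≤ c₂ / m)
    -- (iii)
    (hiii : ∀ n : ℕ, k + 1 ≤ n →
      ‖(∫ z in G,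
          z * ((Gq n - Polynomial.C ((γ : ℂ) ^ (n + 1) / (lam n : ℂ)) * p n).eval z) *
            (starRingEnd ℂ) ((p (n - k)).eval z))‖ ≤ c₃ / n)
    -- (iv)
    (hiv : ∀ j : ℕ, 1 ≤ j → ‖(bs j)‖ ≤ c₄ / (j : ℝ) ^ ((1 : ℝ) + ω)) :
    ∃ C : ℝ, ∀ n : ℕ, k + 1 ≤ n →
      ‖((Real.sqrt (((n : ℝ) - k + 1) / ((n : ℝ) + 1)) : ℂ) *
          (∫ z in G, z * (p n).eval z * (starRingEnd ℂ) ((p (n - k)).eval z)) - bs k)‖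
        ≤ C / Real.sqrt n := by
  classical
  have horthip : ∀ m n, ip G (p m) (p n) = if m = n then 1 else 0 := horth
  have hγC : (γ:ℂ) ≠ 0 := by exact_mod_cast hγ.ne'
  have hlamC : ∀ m, (lam m : ℂ) ≠ 0 := fun m => by exact_mod_cast (hlam m).ne'
  set S : ℝ := ∑ j ∈ Finset.range k, ‖(bs j)‖ with hS
  have hS0 : 0 ≤ S := Finset.sum_nonneg fun j _ => norm_nonneg _
  set D : ℝ := c₂/γ + 2*c₂*S + c₃ with hD
  have hD0 : 0 ≤ D := by positivity
  set C₀ : ℝ := 6*c₁*‖(bs k)‖ + Real.sqrt 2 * D with hC₀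
  have hC₀0 : 0 ≤ C₀ := by positivity
  clear_value S D C₀
  set N₀ : ℕ := 2*k + 2 + ⌈4*c₁⌉₊ with hN₀def
  have main : ∀ n : ℕ, N₀ ≤ n →
      ‖((Real.sqrt (((n : ℝ) - k + 1) / ((n : ℝ) + 1)) : ℂ) *
          (∫ z in G, z * (p n).eval z * (starRingEnd ℂ) ((p (n - k)).eval z)) - bs k)‖
        ≤ C₀ / Real.sqrt n := by
    intro n hn
    have hk_n : k + 1 ≤ n := le_trans (by omega) hn
    have h2k : 2*k + 2 ≤ n := le_trans (by omega) hn
    have hceil : (⌈4*c₁⌉₊ : ℕ) ≤ n := le_trans (by omega) hn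
    have h4c : 4*c₁ ≤ (n:ℝ) := le_trans (Nat.le_ceil _) (by exact_mod_cast hceil)
    set l := n - k with hl
    have hl1 : 1 ≤ l := by omega
    have hn1 : 1 ≤ n := by omega
    have hnR : (1:ℝ) ≤ n := by exact_mod_cast hn1
    have hn_pos : (0:ℝ) < n := by linarith only [hnR]
    have hlR : (l:ℝ) = (n:ℝ) - k := by
      rw [hl, Nat.cast_sub (by omega)]
    have h2kR : 2*(k:ℝ) + 2 ≤ n := by exact_mod_cast h2k
    have hk0R : (0:ℝ) ≤ k := Nat.cast_nonneg k
    have hl_pos : (0:ℝ) < l := by rw [hlR]; linarith only [h2kR, hk0R]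
    have hl_half : (n:ℝ)/2 ≤ l := by rw [hlR]; linarith only [h2kR, hk0R]
    -- alpha facts
    set αn : ℝ := 1 - ((n : ℝ) + 1) * γ ^ (2 * (n + 1)) / (Real.pi * (lam n) ^ 2) with hαn
    set αl : ℝ := 1 - ((l : ℝ) + 1) * γ ^ (2 * (l + 1)) / (Real.pi * (lam l) ^ 2) with hαl
    obtain ⟨hαn0, hαn1⟩ := hi n hn1
    obtain ⟨hαl0, hαl1⟩ := hi l hl1
    rw [← hαn] at hαn0 hαn1
    rw [← hαl] at hαl0 hαl1
    clear_value αn αl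
    have hαn4 : αn ≤ 1/4 := by
      refine hαn1.trans ?_
      rw [div_le_iff₀ hn_pos]; linarith only [h4c]
    have hαl2 : αl ≤ 1/2 := by
      refine hαl1.trans ?_
      rw [div_le_iff₀ hl_pos]; linarith only [h4c, hl_half]
    have h1αn : (1:ℝ)/2 ≤ 1 - αn := by linarith only [hαn4]
    have h1αl : (1:ℝ)/2 ≤ 1 - αl := by linarith only [hαl2]
    have hπ := Real.pi_pos
    have hπ3 := Real.pi_gt_three
    have hlamn := hlam n
    have hlaml := hlam l
    have hγn : (0:ℝ) < γ ^ (n+1) := pow_pos hγ _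
    have hγl : (0:ℝ) < γ ^ (l+1) := pow_pos hγ _
    have hpow : ∀ m : ℕ, γ ^ (2*(m+1)) = (γ^(m+1))^2 := fun m => by
      rw [← pow_mul, mul_comm]
    have hu2 : (γ^(n+1)/lam n)^2 = Real.pi * (1 - αn)/((n:ℝ)+1) := by
      have h1 : 1 - αn = ((n : ℝ) + 1) * γ ^ (2 * (n + 1)) / (Real.pi * (lam n) ^ 2) := by
        rw [hαn]; ring
      rw [h1, hpow n]
      field_simp
    have hw2 : (γ^(l+1)/lam l)^2 = Real.pi * (1 - αl)/((l:ℝ)+1) := by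
      have h1 : 1 - αl = ((l : ℝ) + 1) * γ ^ (2 * (l + 1)) / (Real.pi * (lam l) ^ 2) := by
        rw [hαl]; ring
      rw [h1, hpow l]
      field_simp
    set s : ℝ := Real.sqrt (((n : ℝ) - k + 1) / ((n : ℝ) + 1)) with hs
    set ar : ℝ := lam n / γ^(n+1) with har
    set w : ℝ := γ^(l+1)/lam l with hw
    have hs0 : 0 ≤ s := Real.sqrt_nonneg _
    have har0 : 0 < ar := by positivity
    have hw0 : 0 < w := by positivity
    have harg0 : 0 ≤ ((n : ℝ) - k + 1) / ((n : ℝ) + 1) := by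
      apply div_nonneg _ (by linarith only [hn_pos])
      linarith only [hlR, hl_pos]
    have hs2 : s^2 = ((l:ℝ)+1)/((n:ℝ)+1) := by
      rw [hs, Real.sq_sqrt harg0, hlR]
    have hs1 : s ≤ 1 := by
      rw [hs]
      rw [Real.sqrt_le_one]
      rw [div_le_one (by linarith only [hn_pos])]
      linarith only [hk0R]
    have h1αn0 : (1 - αn) ≠ 0 := ne_of_gt (show (1 - αn) > 0 by linarith only [h1αn])
    have hπ0 : Real.pi ≠ 0 := ne_of_gt hπ
    have hn10 : ((n:ℝ)+1) ≠ 0 := by positivity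
    have hl10 : ((l:ℝ)+1) ≠ 0 := by positivity
    have har2 : ar^2 = ((n:ℝ)+1)/(Real.pi * (1 - αn)) := by
      have h1 : ar = (γ^(n+1)/lam n)⁻¹ := by rw [har, inv_div]
      rw [h1, inv_pow, hu2, inv_div]
    set t : ℝ := s * ar * w with ht
    have ht0 : 0 ≤ t := mul_nonneg (mul_nonneg hs0 har0.le) hw0.le
    have ht2 : t^2 = (1 - αl)/(1 - αn) := by
      have h1 : t^2 = s^2 * ar^2 * w^2 := by rw [ht]; ring
      rw [h1, hs2, har2, hw, hw2]
      field_simp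
    have hsar : (0:ℝ) ≤ s * ar := mul_nonneg hs0 har0.le
    clear_value s ar w t
    -- |t - 1| ≤ 6 c₁ / n
    have hαl_n : αl ≤ 2*c₁/n := by
      refine hαl1.trans ?_
      rw [div_le_div_iff₀ hl_pos hn_pos]
      calc c₁ * (n:ℝ) ≤ c₁ * (2*(l:ℝ)) :=
            mul_le_mul_of_nonneg_left (by linarith only [hl_half]) hc₁
      _ = 2*c₁*(l:ℝ) := by ring
    have hβ0 : (0:ℝ) ≤ c₁/n := by positivity
    have htb : |t - 1| ≤ 6*c₁/n := by
      have h1 : |t - 1| ≤ |t^2 - 1| := by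
        have e : t^2 - 1 = (t-1)*(t+1) := by ring
        have e2 : |t ^ 2 - 1| = |t - 1| * (t + 1) := by
          rw [e, abs_mul, abs_of_nonneg (by linarith only [ht0] : (0:ℝ) ≤ t+1)]
        calc |t - 1| = |t - 1| * 1 := (mul_one _).symm
        _ ≤ |t - 1| * (t + 1) :=
            mul_le_mul_of_nonneg_left (by linarith only [ht0]) (abs_nonneg _)
        _ = |t ^ 2 - 1| := e2.symm
      refine h1.trans ?_
      have e2 : t^2 - 1 = (αn - αl)/(1-αn) := by
        rw [ht2]; field_simp; ring
      rw [e2, abs_div, abs_of_nonneg (by linarith only [h1αn] : (0:ℝ) ≤ 1-αn)]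
      have hnum : |αn - αl| ≤ 3*(c₁/n) := by
        have h2 : αl ≤ 2*(c₁/n) := by
          rw [show 2*(c₁/(n:ℝ)) = 2*c₁/n by ring]; exact hαl_n
        have h3 : αn ≤ c₁/n := hαn1
        rw [abs_le]; constructor <;> linarith only [h2, h3, hαl0, hαn0, hβ0]
      calc |αn - αl| / (1 - αn) ≤ (3*(c₁/n))/(1/2) :=
            div_le_div₀ (by positivity) hnum (by norm_num) h1αn
      _ = 6*c₁/n := by ring
    -- ar ≤ √2 √n
    have har_le : ar ≤ Real.sqrt 2 * Real.sqrt n := by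
      have hpi32 : (3:ℝ)/2 ≤ Real.pi * (1 - αn) := by
        calc (3:ℝ)/2 = 3 * (1/2) := by norm_num
        _ ≤ Real.pi * (1 - αn) :=
            mul_le_mul (by linarith only [hπ3]) h1αn (by norm_num) (by linarith only [hπ3])
      have h2n : ar^2 ≤ 2*n := by
        rw [har2, div_le_iff₀ (by linarith only [hpi32] : (0:ℝ) < Real.pi * (1 - αn))]
        have h := mul_le_mul_of_nonneg_left hpi32
          (by linarith only [hn_pos] : (0:ℝ) ≤ 2*(n:ℝ))
        linarith only [h, hnR]
      calc ar = Real.sqrt (ar^2) := (Real.sqrt_sq har0.le).symm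
      _ ≤ Real.sqrt (2*n) := Real.sqrt_le_sqrt h2n
      _ = Real.sqrt 2 * Real.sqrt n := Real.sqrt_mul (by norm_num) _
    -- main identity
    set q : Polynomial ℂ := Gq n - Polynomial.C ((γ : ℂ) ^ (n + 1) / (lam n : ℂ)) * p n with hq
    set aC : ℂ := (lam n : ℂ) / (γ:ℂ)^(n+1) with haC
    have hγCn : (γ:ℂ)^(n+1) ≠ 0 := pow_ne_zero _ hγC
    have hpoly : C aC * (X * Gq n) - C aC * (X * q) = X * p n := by
      have hone : aC * ((γ:ℂ)^(n+1)/(lam n : ℂ)) = 1 := by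
        rw [haC]; field_simp [hlamC n]
      have h1 : X * Gq n - X * q = X * (C ((γ:ℂ)^(n+1)/(lam n:ℂ)) * p n) := by
        rw [hq]; ring
      calc C aC * (X * Gq n) - C aC * (X * q) = C aC * (X * Gq n - X * q) := by ring
      _ = C aC * (X * (C ((γ:ℂ)^(n+1)/(lam n:ℂ)) * p n)) := by rw [h1]
      _ = C aC * C ((γ:ℂ)^(n+1)/(lam n:ℂ)) * (X * p n) := by ring
      _ = X * p n := by rw [← C_mul, hone, map_one, one_mul]
    have hInt : ip G (X * p n) (p l) =
        aC * ((γ:ℂ)⁻¹ * ip G (Gq (n+1)) (p l)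
          + ∑ j ∈ Finset.range (n+1), bs j * ip G (Gq (n-j)) (p l))
        - aC * ip G (X * q) (p l) := by
      rw [← hpoly, ip_sub G hGb, ip_smul G, ip_smul G, hGqrec n, ip_add G hGb,
        ip_smul G, ip_sum G hGb]
      simp only [ip_smul G]
    have hkmem : k ∈ Finset.range (n+1) := Finset.mem_range.mpr (by omega)
    have hsplit : ∑ j ∈ Finset.range (n+1), bs j * ip G (Gq (n-j)) (p l)
        = bs k * ip G (Gq l) (p l)
          + ∑ j ∈ (Finset.range (n+1)).erase k, bs j * ip G (Gq (n-j)) (p l) :=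
      (Finset.add_sum_erase _ _ hkmem).symm
    have hexp : ip G (Gq l) (p l) = (γ:ℂ)^(l+1) / (lam l : ℂ) :=
      ip_expand G hGb p lam hlam hdeg hcoeff horthip γ hγ Gq hGqdeg hGqlead l
    set R : ℂ := ∑ j ∈ (Finset.range (n+1)).erase k, bs j * ip G (Gq (n-j)) (p l) with hR
    have hRb : ‖R‖ ≤ 2*c₂*S/n := by
      have hterm : ∀ j ∈ (Finset.range (n+1)).erase k,
          ‖(bs j * ip G (Gq (n-j)) (p l))‖ ≤
            (if j < k then ‖(bs j)‖ * (2*c₂/n) else 0) := by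
        intro j hj
        obtain ⟨hjk, hjr⟩ := Finset.mem_erase.mp hj
        have hjn : j ≤ n := by
          have := Finset.mem_range.mp hjr; omega
        by_cases hjlt : j < k
        · rw [if_pos hjlt, norm_mul]
          have hlm : l < n - j := by omega
          have h1 : ‖(ip G (Gq (n-j)) (p l))‖ ≤ c₂/((n-j : ℕ):ℝ) := by
            rw [ip_flip_abs G]
            exact hii l (n-j) hlm
          have h2 : (c₂/((n-j : ℕ):ℝ)) ≤ 2*c₂/n := by
            have hcast : ((n-j:ℕ):ℝ) = (n:ℝ) - j := by rw [Nat.cast_sub hjn]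
            have hjR : (j:ℝ) < k := by exact_mod_cast hjlt
            rw [hcast, div_le_div_iff₀ (by linarith only [hjR, h2kR, hk0R]) hn_pos]
            have h := mul_le_mul_of_nonneg_left
              (show (n:ℝ) ≤ 2*((n:ℝ) - j) by linarith only [hjR, h2kR]) hc₂
            linarith only [h]
          exact mul_le_mul_of_nonneg_left (h1.trans h2) (norm_nonneg _)
        · rw [if_neg hjlt]
          have hzero : ip G (Gq (n-j)) (p l) = 0 := by
            apply ip_ortho G hGb p lam hlam hdeg hcoeff horthip
            rw [hGqdeg]
            exact_mod_cast (by omega : ((n - j : ℕ):ℕ) < l)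
          rw [hzero, mul_zero, norm_zero]
      calc ‖R‖
          ≤ ∑ j ∈ (Finset.range (n+1)).erase k, ‖(bs j * ip G (Gq (n-j)) (p l))‖ :=
            norm_sum_le _ _
      _ ≤ ∑ j ∈ (Finset.range (n+1)).erase k,
            (if j < k then ‖(bs j)‖ * (2*c₂/n) else 0) := Finset.sum_le_sum hterm
      _ = ∑ j ∈ Finset.range k, (if j < k then ‖(bs j)‖ * (2*c₂/n) else 0) := by
          refine (Finset.sum_subset ?_ ?_).symm
          · intro j hj
            have hjk := Finset.mem_range.mp hj
            exact Finset.mem_erase.mpr ⟨by omega, Finset.mem_range.mpr (by omega)⟩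
          · intro j hj hnj
            rw [if_neg]
            intro h
            exact hnj (Finset.mem_range.mpr h)
      _ = ∑ j ∈ Finset.range k, ‖(bs j)‖ * (2*c₂/n) :=
          Finset.sum_congr rfl fun j hj => if_pos (Finset.mem_range.mp hj)
      _ = S * (2*c₂/n) := by rw [hS, ← Finset.sum_mul]
      _ = 2*c₂*S/n := by ring
    have hGq1 : ‖((γ:ℂ)⁻¹ * ip G (Gq (n+1)) (p l))‖ ≤ (c₂/γ)/n := by
      rw [norm_mul, norm_inv]
      have h1 : ‖((γ:ℂ))‖ = γ := by
        rw [Complex.norm_real, Real.norm_of_nonneg hγ.le]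
      rw [h1]
      have h2 : ‖(ip G (Gq (n+1)) (p l))‖ ≤ c₂/((n:ℝ)+1) := by
        rw [ip_flip_abs G]
        have := hii l (n+1) (by omega)
        push_cast at this
        exact this
      calc γ⁻¹ * ‖(ip G (Gq (n+1)) (p l))‖ ≤ γ⁻¹ * (c₂/((n:ℝ)+1)) :=
            mul_le_mul_of_nonneg_left h2 (by positivity)
      _ = c₂/(γ*((n:ℝ)+1)) := by field_simp
      _ ≤ c₂/(γ*(n:ℝ)) := by
          gcongr
          linarith only []
      _ = (c₂/γ)/n := by ring
    have hqb : ‖(ip G (X * q) (p l))‖ ≤ c₃/n := by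
      have h := hiii n hk_n
      rw [← hq] at h
      have heq : ip G (X * q) (p l) =
          ∫ z in G, z * (q.eval z) * (starRingEnd ℂ) ((p (n-k)).eval z) := by
        unfold ip
        congr 1
        ext z
        rw [eval_mul, eval_X]
      rw [heq]
      exact h
    set E : ℂ := (γ:ℂ)⁻¹ * ip G (Gq (n+1)) (p l) + R - ip G (X*q) (p l) with hE
    have hEb : ‖E‖ ≤ D/n := by
      have htri : ‖E‖ ≤ ‖((γ:ℂ)⁻¹ * ip G (Gq (n+1)) (p l))‖
          + ‖R‖ + ‖(ip G (X*q) (p l))‖ := by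
        rw [hE]
        refine (norm_sub_le _ _).trans ?_
        gcongr
        exact norm_add_le _ _
      refine htri.trans ?_
      calc ‖((γ:ℂ)⁻¹ * ip G (Gq (n+1)) (p l))‖ + ‖R‖
            + ‖(ip G (X*q) (p l))‖
          ≤ (c₂/γ)/n + 2*c₂*S/n + c₃/n :=
            add_le_add (add_le_add hGq1 hRb) hqb
      _ = D/n := by rw [hD]; ring
    have hIval : ip G (X * p n) (p l) = bs k * (aC * ((γ:ℂ)^(l+1)/(lam l:ℂ))) + aC * E := by
      rw [hInt, hsplit, hexp, hE]
      ring
    have hgoalInt : (∫ z in G, z * (p n).eval z * (starRingEnd ℂ) ((p (n - k)).eval z))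
        = ip G (X * p n) (p l) := by
      unfold ip
      congr 1
      ext z
      rw [eval_mul, eval_X]
    rw [hgoalInt, hIval]
    have hcast : (s:ℂ) * (bs k * (aC * ((γ:ℂ)^(l+1)/(lam l:ℂ))) + aC * E) - bs k
        = bs k * (((t - 1 : ℝ)):ℂ) + ((s * ar : ℝ):ℂ) * E := by
      have h1 : aC = ((ar : ℝ) : ℂ) := by rw [haC, har]; push_cast; ring
      have h2 : ((γ:ℂ)^(l+1)/(lam l:ℂ)) = ((w:ℝ):ℂ) := by rw [hw]; push_cast; ring
      rw [h1, h2, ht]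
      push_cast
      ring
    rw [hcast]
    have hsqn : Real.sqrt (n:ℝ) * Real.sqrt (n:ℝ) = n := Real.mul_self_sqrt hn_pos.le
    have hsn_pos : 0 < Real.sqrt (n:ℝ) := Real.sqrt_pos.mpr hn_pos
    have hsqle : Real.sqrt (n:ℝ) ≤ n := by
      have hnn := mul_le_mul_of_nonneg_left hnR hn_pos.le
      have h := Real.sqrt_le_sqrt (show (n:ℝ) ≤ (n:ℝ)^2 by
        rw [pow_two]; linarith only [hnn])
      rwa [Real.sqrt_sq hn_pos.le] at h
    calc ‖(bs k * (((t - 1 : ℝ)):ℂ) + ((s * ar : ℝ):ℂ) * E)‖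
        ≤ ‖(bs k)‖ * |t-1| + (s*ar) * ‖E‖ := by
          refine (norm_add_le _ _).trans ?_
          rw [norm_mul, norm_mul, Complex.norm_real, Complex.norm_real, Real.norm_eq_abs,
            Real.norm_eq_abs, abs_of_nonneg hsar]
    _ ≤ ‖(bs k)‖ * (6*c₁/n) + (1 * (Real.sqrt 2 * Real.sqrt n)) * (D/n) :=
          add_le_add
            (mul_le_mul_of_nonneg_left htb (norm_nonneg _))
            (mul_le_mul
              (mul_le_mul hs1 har_le har0.le (by norm_num))
              hEb (norm_nonneg _)
              (by positivity))
    _ ≤ C₀ / Real.sqrt n := by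
          have e1 : (1 * (Real.sqrt 2 * Real.sqrt n)) * (D/n) = Real.sqrt 2 * D / Real.sqrt n := by
            rw [one_mul]
            rw [eq_div_iff (ne_of_gt hsn_pos)]
            field_simp
            linear_combination D * hsqn
          have e2 : ‖(bs k)‖ * (6*c₁/n) ≤ 6*c₁*‖(bs k)‖/Real.sqrt n := by
            have e3 : ‖(bs k)‖ * (6*c₁/n) = 6*c₁*‖(bs k)‖/(n:ℝ) := by ring
            rw [e3]
            gcongr
          rw [e1, hC₀]
          have : (6*c₁*‖(bs k)‖ + Real.sqrt 2 * D)/Real.sqrt (n:ℝ)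
              = 6*c₁*‖(bs k)‖/Real.sqrt (n:ℝ) + Real.sqrt 2 * D / Real.sqrt (n:ℝ) := by
            ring
          rw [this]
          gcongr
  -- wrap up: absorb finitely many exceptional n
  refine ⟨C₀ + ∑ m ∈ Finset.range N₀,
      ‖((Real.sqrt (((m : ℝ) - k + 1) / ((m : ℝ) + 1)) : ℂ) *
          (∫ z in G, z * (p m).eval z * (starRingEnd ℂ) ((p (m - k)).eval z)) - bs k)‖
        * Real.sqrt m, ?_⟩
  intro n hkn
  have hn_pos : (0:ℝ) < n := by
    have : 0 < n := by omega
    exact_mod_cast this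
  have hsn : 0 < Real.sqrt n := Real.sqrt_pos.mpr hn_pos
  have hsum0 : 0 ≤ ∑ m ∈ Finset.range N₀,
      ‖((Real.sqrt (((m : ℝ) - k + 1) / ((m : ℝ) + 1)) : ℂ) *
          (∫ z in G, z * (p m).eval z * (starRingEnd ℂ) ((p (m - k)).eval z)) - bs k)‖
        * Real.sqrt m :=
    Finset.sum_nonneg fun m _ => mul_nonneg (norm_nonneg _) (Real.sqrt_nonneg _)
  by_cases hcase : N₀ ≤ n
  · refine (main n hcase).trans ?_
    gcongr
    exact le_add_of_nonneg_right hsum0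
  · push_neg at hcase
    rw [le_div_iff₀ hsn]
    have hmem : n ∈ Finset.range N₀ := Finset.mem_range.mpr hcase
    calc ‖((Real.sqrt (((n : ℝ) - k + 1) / ((n : ℝ) + 1)) : ℂ) *
          (∫ z in G, z * (p n).eval z * (starRingEnd ℂ) ((p (n - k)).eval z)) - bs k)‖
        * Real.sqrt n
        ≤ ∑ m ∈ Finset.range N₀,
          ‖((Real.sqrt (((m : ℝ) - k + 1) / ((m : ℝ) + 1)) : ℂ) *
              (∫ z in G, z * (p m).eval z * (starRingEnd ℂ) ((p (m - k)).eval z)) - bs k)‖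
            * Real.sqrt m :=
          Finset.single_le_sum (f := fun (m : ℕ) => ‖((Real.sqrt (((m : ℝ) - k + 1) / ((m : ℝ) + 1)) : ℂ) *
              (∫ z in G, z * (p m).eval z * (starRingEnd ℂ) ((p (m - k)).eval z)) - bs k)‖
            * Real.sqrt m)
            (fun m _ => mul_nonneg (norm_nonneg _) (Real.sqrt_nonneg _)) hmem
    _ ≤ _ := le_add_of_nonneg_left hC₀0
end

section
/- (Theorem 2.2, estimate (3.4), conditional form.) Fix an integer k ≥ 0 and a real number σ > 1/2. Assume there exist constants c_1, c_2, c_3, c_4 ≥ 0 such that: (i) for all n ≥ 1, |√((n+1)/π)·γ^{n+1}/λ_n − 1| ≤ c_1/n^{2σ}; (ii) |⟨p_l, G_m⟩| ≤ c_2/m^{σ+1/2} whenever m > l ≥ 0; (iii) for all n ≥ k+1, |⟨z·q_{n−1}, p_{n−k}⟩| ≤ c_3/n^{σ+1/2}, where q_{n−1} := G_n − (γ^{n+1}/λ_n)·p_n; (iv) |b_j| ≤ c_4/j^{σ+1/2} for all j ≥ 1. Then there exists a constant C (depending only on k, σ and c_1,…,c_4) such that for all n ≥ k+1, |√((n−k+1)/(n+1))·⟨z·p_n,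 p_{n−k}⟩ − b_k| ≤ C/n^σ. -/
open MeasureTheory Polynomial

noncomputable def pip (G : Set ℂ) (P Q : Polynomial ℂ) : ℂ :=
  ∫ z in G, P.eval z * (starRingEnd ℂ) (Q.eval z)

lemma pip_integrable (G : Set ℂ) (hGb : Bornology.IsBounded G) (P Q : Polynomial ℂ) :
    IntegrableOn (fun z => P.eval z * (starRingEnd ℂ) (Q.eval z)) G := by
  have hc : IsCompact (closure G) := hGb.isCompact_closure
  have : IntegrableOn (fun z => P.eval z * (starRingEnd ℂ) (Q.eval z)) (closure G) :=
    (Continuous.continuousOn (by continuity)).integrableOn_compact hc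
  exact this.mono_set subset_closure

lemma pip_add_left (G : Set ℂ) (hGb : Bornology.IsBounded G) (P P' Q : Polynomial ℂ) :
    pip G (P + P') Q = pip G P Q + pip G P' Q := by
  unfold pip
  rw [← integral_add (pip_integrable G hGb P Q) (pip_integrable G hGb P' Q)]
  simp [add_mul]

lemma pip_smul_left (G : Set ℂ) (a : ℂ) (P Q : Polynomial ℂ) :
    pip G (Polynomial.C a * P) Q = a * pip G P Q := by
  unfold pip
  rw [← integral_const_mul]
  simp [mul_assoc]

lemma pip_conj_symm (G : Set ℂ) (P Q : Polynomial ℂ) :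
    pip G P Q = (starRingEnd ℂ) (pip G Q P) := by
  unfold pip
  rw [← integral_conj]
  simp [mul_comm]

lemma pip_zero_left (G : Set ℂ) (Q : Polynomial ℂ) : pip G 0 Q = 0 := by
  simp [pip]

lemma pip_sum_left (G : Set ℂ) (hGb : Bornology.IsBounded G) {ι : Type*} (s : Finset ι)
    (f : ι → Polynomial ℂ) (Q : Polynomial ℂ) :
    pip G (∑ i ∈ s, f i) Q = ∑ i ∈ s, pip G (f i) Q := by
  classical
  induction s using Finset.induction with
  | empty => simp [pip_zero_left]
  | insert _ _ h ih => rw [Finset.sum_insert h, pip_add_left G hGb, ih, Finset.sum_insert h]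

section
variable (G : Set ℂ) (hGb : Bornology.IsBounded G)
  (p : ℕ → Polynomial ℂ) (lam : ℕ → ℝ)
  (hlam : ∀ n, 0 < lam n)
  (hdeg : ∀ n, (p n).degree = n)
  (hcoeff : ∀ n, (p n).coeff n = (lam n : ℂ))
  (horth : ∀ m n, pip G (p m) (p n) = if m = n then 1 else 0)

include hGb hlam hdeg hcoeff horth in
lemma ortho_aux (d : ℕ) : ∀ Q : Polynomial ℂ, Q.degree < (d : ℕ) →
    ∀ m, d ≤ m → pip G Q (p m) = 0 := by
  induction d with
  | zero =>
    intro Q hQ m _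
    rw [Nat.cast_zero, Nat.WithBot.lt_zero_iff, degree_eq_bot] at hQ
    rw [hQ]; exact pip_zero_left G _
  | succ d ih =>
    intro Q hQ m hm
    set c : ℂ := Q.coeff d / (lam d : ℂ) with hc
    have hlamne : ((lam d : ℝ) : ℂ) ≠ 0 := Complex.ofReal_ne_zero.mpr (hlam d).ne'
    set Q' : Polynomial ℂ := Q - Polynomial.C c * p d with hQ'
    have hdegC : (Polynomial.C c * p d).degree ≤ (d : ℕ) := by
      refine le_trans (degree_mul_le _ _) ?_
      calc (Polynomial.C c).degree + (p d).degree ≤ 0 + (d : ℕ) :=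
            add_le_add degree_C_le (le_of_eq (hdeg d))
        _ = (d : ℕ) := zero_add _
    have hQ'deg : Q'.degree < (d : ℕ) := by
      rw [degree_lt_iff_coeff_zero]
      intro j hj
      rcases eq_or_lt_of_le hj with rfl | hj'
      · simp only [hQ', coeff_sub, coeff_C_mul, hcoeff d, hc]
        field_simp
        ring
      · have h1 : Q.coeff j = 0 := coeff_eq_zero_of_degree_lt
          (lt_of_lt_of_le hQ (by exact_mod_cast Nat.succ_le_of_lt hj'))
        have h2 : (Polynomial.C c * p d).coeff j = 0 :=
          coeff_eq_zero_of_degree_lt (lt_of_le_of_lt hdegC (by exact_mod_cast hj'))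
        simp [hQ', coeff_sub, h1, h2]
    have hrw : Q = Q' + Polynomial.C c * p d := by ring
    rw [hrw, pip_add_left G hGb, pip_smul_left G,
      ih Q' hQ'deg m (le_trans (Nat.le_succ d) hm),
      horth d m, if_neg (by omega)]
    ring

include hGb hlam hdeg hcoeff horth in
lemma ortho_left (Q : Polynomial ℂ) (m : ℕ) (h : Q.degree < (m : ℕ)) :
    pip G Q (p m) = 0 :=
  ortho_aux G hGb p lam hlam hdeg hcoeff horth m Q h m le_rfl

include hGb hlam hdeg hcoeff horth in
lemma gq_pip (γ : ℝ) (Gq : ℕ → Polynomial ℂ)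
    (hGqdeg : ∀ n, (Gq n).degree = n) (hGqlead : ∀ n, (Gq n).coeff n = (γ : ℂ) ^ (n + 1))
    (m : ℕ) :
    pip G (Gq m) (p m) = (γ : ℂ) ^ (m + 1) / (lam m : ℂ) := by
  set α : ℂ := (γ : ℂ) ^ (m + 1) / (lam m : ℂ) with hα
  have hlamne : ((lam m : ℝ) : ℂ) ≠ 0 := Complex.ofReal_ne_zero.mpr (hlam m).ne'
  set R : Polynomial ℂ := Gq m - Polynomial.C α * p m with hR
  have hdegC : (Polynomial.C α * p m).degree ≤ (m : ℕ) := by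
    refine le_trans (degree_mul_le _ _) ?_
    calc (Polynomial.C α).degree + (p m).degree ≤ 0 + (m : ℕ) :=
          add_le_add degree_C_le (le_of_eq (hdeg m))
      _ = (m : ℕ) := zero_add _
  have hRdeg : R.degree < (m : ℕ) := by
    rw [degree_lt_iff_coeff_zero]
    intro j hj
    rcases eq_or_lt_of_le hj with rfl | hj'
    · simp only [hR, coeff_sub, coeff_C_mul, hcoeff m, hGqlead m, hα]
      field_simp
      ring
    · have h1 : (Gq m).coeff j = 0 := coeff_eq_zero_of_degree_lt
        (lt_of_le_of_lt (le_of_eq (hGqdeg m)) (by exact_mod_cast hj'))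
      have h2 : (Polynomial.C α * p m).coeff j = 0 :=
        coeff_eq_zero_of_degree_lt (lt_of_le_of_lt hdegC (by exact_mod_cast hj'))
      simp [hR, coeff_sub, h1, h2]
  have hrw : Gq m = Polynomial.C α * p m + R := by ring
  rw [hrw, pip_add_left G hGb, pip_smul_left G, horth m m, if_pos rfl,
    ortho_left G hGb p lam hlam hdeg hcoeff horth R m hRdeg]
  ring

include hGb hlam hdeg hcoeff horth in
lemma key_identity (γ : ℝ) (bs : ℕ → ℂ) (Gq : ℕ → Polynomial ℂ)
    (hGqrec : ∀ n, Polynomial.X * Gq n =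
      Polynomial.C ((γ : ℂ))⁻¹ * Gq (n + 1) +
        ∑ j ∈ Finset.range (n + 1), Polynomial.C (bs j) * Gq (n - j))
    (hGqdeg : ∀ n, (Gq n).degree = n)
    (hGqlead : ∀ n, (Gq n).coeff n = (γ : ℂ) ^ (n + 1))
    (k n : ℕ) (hn : k + 1 ≤ n) :
    ((γ : ℂ) ^ (n + 1) / (lam n : ℂ)) * pip G (Polynomial.X * p n) (p (n - k))
      = (γ : ℂ)⁻¹ * pip G (Gq (n + 1)) (p (n - k))
        + bs k * ((γ : ℂ) ^ (n - k + 1) / (lam (n - k) : ℂ))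
        + (∑ j ∈ Finset.range k, bs j * pip G (Gq (n - j)) (p (n - k)))
        - pip G (Polynomial.X * (Gq n - Polynomial.C ((γ : ℂ) ^ (n + 1) / (lam n : ℂ)) * p n))
            (p (n - k)) := by
  have h0 : pip G (Polynomial.X * Gq n) (p (n - k))
      = (γ : ℂ)⁻¹ * pip G (Gq (n + 1)) (p (n - k))
        + ∑ j ∈ Finset.range (n + 1), bs j * pip G (Gq (n - j)) (p (n - k)) := by
    rw [hGqrec n, pip_add_left G hGb, pip_smul_left G, pip_sum_left G hGb]
    congr 1
    exact Finset.sum_congr rfl fun j _ => pip_smul_left G _ _ _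
  have hsum : ∑ j ∈ Finset.range (n + 1), bs j * pip G (Gq (n - j)) (p (n - k))
      = (∑ j ∈ Finset.range k, bs j * pip G (Gq (n - j)) (p (n - k)))
        + bs k * ((γ : ℂ) ^ (n - k + 1) / (lam (n - k) : ℂ)) := by
    rw [Finset.range_eq_Ico,
      ← Finset.sum_Ico_consecutive _ (Nat.zero_le (k + 1)) (by omega : k + 1 ≤ n + 1)]
    have hz : ∑ j ∈ Finset.Ico (k + 1) (n + 1), bs j * pip G (Gq (n - j)) (p (n - k)) = 0 := by
      refine Finset.sum_eq_zero fun j hj => ?_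
      rw [Finset.mem_Ico] at hj
      have : pip G (Gq (n - j)) (p (n - k)) = 0 := by
        refine ortho_left G hGb p lam hlam hdeg hcoeff horth _ _ ?_
        rw [hGqdeg]
        exact_mod_cast (by omega : n - j < n - k)
      rw [this, mul_zero]
    rw [hz, add_zero, ← Finset.range_eq_Ico, Finset.sum_range_succ,
      gq_pip G hGb p lam hlam hdeg hcoeff horth γ Gq hGqdeg hGqlead (n - k)]
  have hL : Polynomial.X * Gq n
      = Polynomial.C ((γ : ℂ) ^ (n + 1) / (lam n : ℂ)) * (Polynomial.X * p n)
        + Polynomial.X * (Gq n - Polynomial.C ((γ : ℂ) ^ (n + 1) / (lam n : ℂ)) * p n) := by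
    ring
  have h1 : pip G (Polynomial.X * Gq n) (p (n - k))
      = ((γ : ℂ) ^ (n + 1) / (lam n : ℂ)) * pip G (Polynomial.X * p n) (p (n - k))
        + pip G (Polynomial.X * (Gq n - Polynomial.C ((γ : ℂ) ^ (n + 1) / (lam n : ℂ)) * p n))
            (p (n - k)) := by
    rw [hL, pip_add_left G hGb, pip_smul_left G]
  rw [h1, hsum] at h0
  linear_combination h0
end

lemma tail_bound {σ : ℝ} (f : ℕ → ℝ) (k N : ℕ) (C₀ : ℝ) (hC₀ : 0 ≤ C₀)
    (h : ∀ n : ℕ, N ≤ n → k + 1 ≤ n → f n ≤ C₀ / (n : ℝ) ^ σ) :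
    ∃ C : ℝ, ∀ n : ℕ, k + 1 ≤ n → f n ≤ C / (n : ℝ) ^ σ := by
  refine ⟨C₀ + ∑ m ∈ Finset.range N, max (f m * (m : ℝ) ^ σ) 0, fun n hn => ?_⟩
  have hn1 : (1 : ℝ) ≤ (n : ℝ) := by exact_mod_cast (by omega : 1 ≤ n)
  have hnp : (0 : ℝ) < (n : ℝ) ^ σ := Real.rpow_pos_of_pos (by linarith) σ
  have hsum : (0 : ℝ) ≤ ∑ m ∈ Finset.range N, max (f m * (m : ℝ) ^ σ) 0 :=
    Finset.sum_nonneg fun m _ => le_max_right _ _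
  by_cases hN : N ≤ n
  · calc f n ≤ C₀ / (n : ℝ) ^ σ := h n hN hn
      _ ≤ (C₀ + ∑ m ∈ Finset.range N, max (f m * (m : ℝ) ^ σ) 0) / (n : ℝ) ^ σ := by
          gcongr
          exact le_add_of_nonneg_right hsum
  · push_neg at hN
    rw [le_div_iff₀ hnp]
    calc f n * (n : ℝ) ^ σ ≤ max (f n * (n : ℝ) ^ σ) 0 := le_max_left _ _
      _ ≤ ∑ m ∈ Finset.range N, max (f m * (m : ℝ) ^ σ) 0 :=
          Finset.single_le_sum (fun m _ => le_max_right (f m * (m : ℝ) ^ σ) 0)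
            (Finset.mem_range.mpr hN)
      _ ≤ C₀ + ∑ m ∈ Finset.range N, max (f m * (m : ℝ) ^ σ) 0 := le_add_of_nonneg_left hC₀
set_option maxHeartbeats 2000000 in
/-- Theorem 2.2, estimate (3.4), conditional form: under the stated
hypotheses (i)–(iv), with `σ > 1/2`, there is a constant `C` such that for all `n ≥ k+1`,
`|√((n−k+1)/(n+1))·⟨z·p_n, p_{n−k}⟩ − b_k| ≤ C/n^σ`. -/
theorem diagonal_asymptotics_smooth
    (G : Set ℂ) (hG : G.Nonempty) (hGo : IsOpen G) (hGb : Bornology.IsBounded G)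
    (p : ℕ → Polynomial ℂ) (lam : ℕ → ℝ)
    (hlam : ∀ n, 0 < lam n)
    (hdeg : ∀ n, (p n).degree = n)
    (hcoeff : ∀ n, (p n).coeff n = (lam n : ℂ))
    (horth : ∀ m n, (∫ z in G, (p m).eval z * (starRingEnd ℂ) ((p n).eval z)) =
      if m = n then 1 else 0)
    (γ : ℝ) (hγ : 0 < γ) (bs : ℕ → ℂ)
    (Gq : ℕ → Polynomial ℂ)
    (hGq0 : Gq 0 = Polynomial.C (γ : ℂ))
    (hGqrec : ∀ n, Polynomial.X * Gq n =
      Polynomial.C ((γ : ℂ))⁻¹ * Gq (n + 1) +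
        ∑ j ∈ Finset.range (n + 1), Polynomial.C (bs j) * Gq (n - j))
    (hGqdeg : ∀ n, (Gq n).degree = n)
    (hGqlead : ∀ n, (Gq n).coeff n = (γ : ℂ) ^ (n + 1))
    (k : ℕ)
    (σ : ℝ) (hσ : 1 / 2 < σ)
    (c₁ c₂ c₃ c₄ : ℝ) (hc₁ : 0 ≤ c₁) (hc₂ : 0 ≤ c₂) (hc₃ : 0 ≤ c₃) (hc₄ : 0 ≤ c₄)
    -- (i)
    (hi : ∀ n : ℕ, 1 ≤ n →
      |Real.sqrt (((n : ℝ) + 1) / Real.pi) * γ ^ (n + 1) / lam n - 1| ≤ c₁ / (n : ℝ) ^ (2 * σ))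
    -- (ii)
    (hii : ∀ l m : ℕ, l < m →
      ‖∫ z in G, (p l).eval z * (starRingEnd ℂ) ((Gq m).eval z)‖ ≤ c₂ / (m : ℝ) ^ (σ + 1 / 2))
    -- (iii)
    (hiii : ∀ n : ℕ, k + 1 ≤ n →
      ‖∫ z in G,
          z * ((Gq n - Polynomial.C ((γ : ℂ) ^ (n + 1) / (lam n : ℂ)) * p n).eval z) *
            (starRingEnd ℂ) ((p (n - k)).eval z)‖ ≤ c₃ / (n : ℝ) ^ (σ + 1 / 2))
    -- (iv)
    (hiv : ∀ j : ℕ, 1 ≤ j → ‖bs j‖ ≤ c₄ / (j : ℝ) ^ (σ + 1 / 2)) :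
    ∃ C : ℝ, ∀ n : ℕ, k + 1 ≤ n →
      ‖(Real.sqrt (((n : ℝ) - k + 1) / ((n : ℝ) + 1)) : ℂ) *
          (∫ z in G, z * (p n).eval z * (starRingEnd ℂ) ((p (n - k)).eval z)) - bs k‖
        ≤ C / (n : ℝ) ^ σ := by
  classical
  have horth' : ∀ m n, pip G (p m) (p n) = if m = n then 1 else 0 := horth
  have hπ := Real.pi_pos
  have hπ1 : (1 : ℝ) ≤ Real.pi := by linarith [Real.pi_gt_three]
  set a : ℕ → ℝ := fun m => γ ^ (m + 1) / lam m with ha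
  have hapos : ∀ m : ℕ, 0 < a m := fun m => div_pos (pow_pos hγ _) (hlam m)
  set u : ℕ → ℝ := fun m => Real.sqrt (((m : ℝ) + 1) / Real.pi) * a m with hu
  have hupos : ∀ m : ℕ, 0 < u m := fun m =>
    mul_pos (Real.sqrt_pos.mpr (by positivity)) (hapos m)
  have hui : ∀ m : ℕ, 1 ≤ m → |u m - 1| ≤ c₁ / (m : ℝ) ^ (2 * σ) := by
    intro m hm
    have h := hi m hm
    rwa [mul_div_assoc] at h
  clear_value a u
  have htend : Filter.Tendsto (fun m : ℕ => c₁ / (m : ℝ) ^ (2 * σ)) Filter.atTop (nhds 0) :=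
    Filter.Tendsto.div_atTop tendsto_const_nhds
      ((tendsto_rpow_atTop (by linarith)).comp tendsto_natCast_atTop_atTop)
  obtain ⟨N₀, hN₀⟩ := Filter.eventually_atTop.mp
    (htend.eventually_lt_const (by norm_num : (0 : ℝ) < 1 / 2))
  have huhalf : ∀ m : ℕ, 1 ≤ m → N₀ ≤ m → 1 / 2 ≤ u m := by
    intro m h1 h2
    have hb := lt_of_le_of_lt (hui m h1) (hN₀ m h2)
    have := abs_lt.mp hb
    linarith [this.1]
  set M : ℝ := max (‖bs 0‖) c₄ with hM
  have hM0 : 0 ≤ M := le_trans (norm_nonneg _) (le_max_left _ _)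
  have hbsM : ∀ j : ℕ, ‖bs j‖ ≤ M := by
    intro j
    match j with
    | 0 => exact le_max_left _ _
    | (j + 1) =>
      have h1 := hiv (j + 1) (by omega)
      have h2 : (1 : ℝ) ≤ ((j + 1 : ℕ) : ℝ) ^ (σ + 1 / 2) :=
        Real.one_le_rpow (by exact_mod_cast Nat.one_le_iff_ne_zero.mpr (Nat.succ_ne_zero j))
          (by linarith)
      calc ‖bs (j + 1)‖ ≤ c₄ / ((j + 1 : ℕ) : ℝ) ^ (σ + 1 / 2) := h1
        _ ≤ c₄ / 1 := by gcongr
        _ = c₄ := div_one c₄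
        _ ≤ M := le_max_right _ _
  set K₁ : ℝ := 2 * c₁ * (((k : ℝ) + 1) ^ (2 * σ) + 1) with hK₁
  have hK₁0 : 0 ≤ K₁ := by positivity
  set K₂ : ℝ := γ⁻¹ * c₂ + (k : ℝ) * (M * (c₂ * ((k : ℝ) + 1) ^ (σ + 1 / 2))) + c₃ with hK₂
  have hK₂0 : 0 ≤ K₂ := by positivity
  refine tail_bound _ k (N₀ + k + 1) (‖bs k‖ * K₁ + 3 * K₂) (by positivity) ?_
  intro n hNn hkn
  have hkn' : k ≤ n := by omega
  have hl1 : 1 ≤ n - k := by omega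
  have hn1 : 1 ≤ n := by omega
  have hnR : (1 : ℝ) ≤ (n : ℝ) := by exact_mod_cast hn1
  have hlR : (1 : ℝ) ≤ ((n - k : ℕ) : ℝ) := by exact_mod_cast hl1
  have hnpos : (0 : ℝ) < (n : ℝ) := by linarith
  have hcast : ((n : ℝ) - (k : ℝ) + 1) = (((n - k : ℕ)) : ℝ) + 1 := by
    rw [Nat.cast_sub hkn']
  rw [hcast]
  have hIgoal : (∫ z in G, z * (p n).eval z * (starRingEnd ℂ) ((p (n - k)).eval z))
      = pip G (Polynomial.X * p n) (p (n - k)) := by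
    simp [pip]
  rw [hIgoal]
  set s : ℝ := Real.sqrt ((((n - k : ℕ) : ℝ) + 1) / ((n : ℝ) + 1)) with hs
  set I : ℂ := pip G (Polynomial.X * p n) (p (n - k)) with hI
  set A : ℂ := pip G (Gq (n + 1)) (p (n - k)) with hA
  set S : ℂ := ∑ j ∈ Finset.range k, bs j * pip G (Gq (n - j)) (p (n - k)) with hS
  set T : ℂ := pip G (Polynomial.X *
      (Gq n - Polynomial.C ((γ : ℂ) ^ (n + 1) / (lam n : ℂ)) * p n)) (p (n - k)) with hT
  set E : ℂ := (γ : ℂ)⁻¹ * A + S - T with hE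
  clear_value s I A S T E
  have key := key_identity G hGb p lam hlam hdeg hcoeff horth' γ bs Gq hGqrec hGqdeg hGqlead
    k n hkn
  have haC : ∀ m : ℕ, ((a m : ℝ) : ℂ) = (γ : ℂ) ^ (m + 1) / (lam m : ℂ) := by
    intro m
    simp only [ha]
    push_cast
    ring
  have hanne : ((a n : ℝ) : ℂ) ≠ 0 := by
    exact_mod_cast Complex.ofReal_ne_zero.mpr (hapos n).ne'
  have key' : ((a n : ℝ) : ℂ) * I = bs k * ((a (n - k) : ℝ) : ℂ) + E := by
    rw [haC n, haC (n - k), hE, hI, hA, hS, hT]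
    linear_combination key
  have hIeq : I = (bs k * ((a (n - k) : ℝ) : ℂ) + E) / ((a n : ℝ) : ℂ) := by
    rw [eq_div_iff hanne]
    linear_combination key'
  -- ratio identity
  have hun : 1 / 2 ≤ u n := huhalf n hn1 (by omega)
  have hul : 1 / 2 ≤ u (n - k) := huhalf (n - k) hl1 (by omega)
  have hratio : s * a (n - k) / a n = u (n - k) / u n := by
    have e1 : s = Real.sqrt (((n - k : ℕ) : ℝ) + 1) / Real.sqrt ((n : ℝ) + 1) := by
      rw [hs, Real.sqrt_div (by positivity)]
    have e2 : ∀ m : ℕ, Real.sqrt (((m : ℝ) + 1) / Real.pi)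
        = Real.sqrt ((m : ℝ) + 1) / Real.sqrt Real.pi := fun m =>
      Real.sqrt_div (by positivity) _
    simp only [hu, e1, e2]
    have h1 : Real.sqrt Real.pi ≠ 0 := by positivity
    have h2 : Real.sqrt ((n : ℝ) + 1) ≠ 0 := by positivity
    have h3 : a n ≠ 0 := (hapos n).ne'
    field_simp
    try ring
  have decomp : (s : ℂ) * I - bs k
      = ((u (n - k) / u n - 1 : ℝ) : ℂ) * bs k + ((s / a n : ℝ) : ℂ) * E := by
    rw [hIeq, ← hratio]
    push_cast
    have hanne' : ((a n : ℝ) : ℂ) ≠ 0 := hanne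
    field_simp
    ring
  have habs : ‖(s : ℂ) * I - bs k‖
      ≤ |u (n - k) / u n - 1| * ‖bs k‖ + (s / a n) * ‖E‖ := by
    rw [decomp]
    refine le_trans (norm_add_le _ _) ?_
    rw [norm_mul, norm_mul, Complex.norm_real, Complex.norm_real, Real.norm_eq_abs, Real.norm_eq_abs,
      abs_of_nonneg (div_nonneg (hs ▸ Real.sqrt_nonneg _) (hapos n).le)]
  -- bound B1
  have hnkl : (n : ℝ) ≤ ((k : ℝ) + 1) * ((n - k : ℕ) : ℝ) := by
    have hnlk : ((n - k : ℕ) : ℝ) = (n : ℝ) - (k : ℝ) := Nat.cast_sub hkn'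
    nlinarith [mul_le_mul_of_nonneg_left hlR (show (0 : ℝ) ≤ (k : ℝ) by positivity)]
  have hfrac : ∀ (c : ℝ), 0 ≤ c → ∀ (e : ℝ), 0 ≤ e → ∀ m : ℕ,
      (n : ℝ) ≤ ((k : ℝ) + 1) * (m : ℝ) →
      c / (m : ℝ) ^ e ≤ c * ((k : ℝ) + 1) ^ e / (n : ℝ) ^ e := by
    intro c hc e he m hm
    have hld : (n : ℝ) / ((k : ℝ) + 1) ≤ (m : ℝ) := by
      rw [div_le_iff₀ (by positivity)]; linarith
    have hrl : (n : ℝ) ^ e / ((k : ℝ) + 1) ^ e ≤ (m : ℝ) ^ e := by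
      rw [← Real.div_rpow (by positivity) (by positivity)]
      exact Real.rpow_le_rpow (by positivity) hld he
    have hdp : (0 : ℝ) < (n : ℝ) ^ e / ((k : ℝ) + 1) ^ e :=
      div_pos (Real.rpow_pos_of_pos hnpos e) (Real.rpow_pos_of_pos (by positivity) e)
    calc c / (m : ℝ) ^ e ≤ c / ((n : ℝ) ^ e / ((k : ℝ) + 1) ^ e) :=
          div_le_div_of_nonneg_left hc hdp hrl
      _ = c * ((k : ℝ) + 1) ^ e / (n : ℝ) ^ e := div_div_eq_mul_div c _ _
  have hB1 : |u (n - k) / u n - 1| ≤ K₁ / (n : ℝ) ^ σ := by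
    have h1 : |u (n - k) / u n - 1| = |u (n - k) - u n| / u n := by
      rw [div_sub_one (hupos n).ne', abs_div, abs_of_pos (hupos n)]
    have h2 : |u (n - k) - u n| ≤ c₁ / ((n - k : ℕ) : ℝ) ^ (2 * σ) + c₁ / (n : ℝ) ^ (2 * σ) := by
      calc |u (n - k) - u n| ≤ |u (n - k) - 1| + |1 - u n| := abs_sub_le _ 1 _
        _ = |u (n - k) - 1| + |u n - 1| := by rw [abs_sub_comm 1 (u n)]
        _ ≤ c₁ / ((n - k : ℕ) : ℝ) ^ (2 * σ) + c₁ / (n : ℝ) ^ (2 * σ) :=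
            add_le_add (hui (n - k) hl1) (hui n hn1)
    have h3 : |u (n - k) / u n - 1|
        ≤ 2 * (c₁ / ((n - k : ℕ) : ℝ) ^ (2 * σ) + c₁ / (n : ℝ) ^ (2 * σ)) := by
      rw [h1]
      have := div_le_div₀ (by positivity) h2 (by norm_num : (0:ℝ) < 1/2) hun
      calc |u (n - k) - u n| / u n
          ≤ (c₁ / ((n - k : ℕ) : ℝ) ^ (2 * σ) + c₁ / (n : ℝ) ^ (2 * σ)) / (1 / 2) := this
        _ = 2 * (c₁ / ((n - k : ℕ) : ℝ) ^ (2 * σ) + c₁ / (n : ℝ) ^ (2 * σ)) := by ring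
    have h4 : c₁ / ((n - k : ℕ) : ℝ) ^ (2 * σ)
        ≤ c₁ * ((k : ℝ) + 1) ^ (2 * σ) / (n : ℝ) ^ (2 * σ) :=
      hfrac c₁ hc₁ (2 * σ) (by linarith) (n - k) hnkl
    have h6 : (n : ℝ) ^ σ ≤ (n : ℝ) ^ (2 * σ) :=
      Real.rpow_le_rpow_of_exponent_le hnR (by linarith)
    have h7 : K₁ / (n : ℝ) ^ (2 * σ) ≤ K₁ / (n : ℝ) ^ σ :=
      div_le_div_of_nonneg_left hK₁0 (by positivity) h6
    have h8 : 2 * (c₁ * ((k : ℝ) + 1) ^ (2 * σ) / (n : ℝ) ^ (2 * σ) + c₁ / (n : ℝ) ^ (2 * σ))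
        = K₁ / (n : ℝ) ^ (2 * σ) := by
      rw [hK₁]; ring
    calc |u (n - k) / u n - 1|
        ≤ 2 * (c₁ / ((n - k : ℕ) : ℝ) ^ (2 * σ) + c₁ / (n : ℝ) ^ (2 * σ)) := h3
      _ ≤ 2 * (c₁ * ((k : ℝ) + 1) ^ (2 * σ) / (n : ℝ) ^ (2 * σ) + c₁ / (n : ℝ) ^ (2 * σ)) := by
          linarith
      _ = K₁ / (n : ℝ) ^ (2 * σ) := h8
      _ ≤ K₁ / (n : ℝ) ^ σ := h7
  -- bound B2
  have hsqrt4 : Real.sqrt 4 = 2 := by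
    rw [show (4 : ℝ) = 2 ^ 2 by norm_num, Real.sqrt_sq (by norm_num : (0:ℝ) ≤ 2)]
  have hsqrt9 : Real.sqrt 9 = 3 := by
    rw [show (9 : ℝ) = 3 ^ 2 by norm_num, Real.sqrt_sq (by norm_num : (0:ℝ) ≤ 3)]
  have hlen : ((n - k : ℕ) : ℝ) ≤ (n : ℝ) := by exact_mod_cast Nat.sub_le n k
  have hB2 : s / a n ≤ 3 * Real.sqrt (n : ℝ) := by
    have hs1 : s ≤ 1 := by
      rw [hs, show (1:ℝ) = Real.sqrt 1 from (Real.sqrt_one).symm]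
      exact Real.sqrt_le_sqrt (by rw [div_le_one (by positivity)]; linarith)
    have hinv : 1 / a n ≤ 2 * Real.sqrt ((n : ℝ) + 1) := by
      have h1 : 1 / a n = Real.sqrt (((n : ℝ) + 1) / Real.pi) / u n := by
        rw [hu]
        have h3 : a n ≠ 0 := (hapos n).ne'
        have h4 : Real.sqrt (((n : ℝ) + 1) / Real.pi) ≠ 0 := by positivity
        field_simp
      rw [h1]
      calc Real.sqrt (((n : ℝ) + 1) / Real.pi) / u n
          ≤ Real.sqrt (((n : ℝ) + 1) / Real.pi) / (1 / 2) :=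
            div_le_div_of_nonneg_left (Real.sqrt_nonneg _) (by norm_num) hun
        _ = 2 * Real.sqrt (((n : ℝ) + 1) / Real.pi) := by ring
        _ ≤ 2 * Real.sqrt ((n : ℝ) + 1) := by
            have := Real.sqrt_le_sqrt (div_le_self (by positivity : (0:ℝ) ≤ (n:ℝ)+1) hπ1)
            linarith
    have h2s : 2 * Real.sqrt ((n : ℝ) + 1) ≤ 3 * Real.sqrt (n : ℝ) := by
      have h0 : Real.sqrt (4 * ((n : ℝ) + 1)) ≤ Real.sqrt (9 * (n : ℝ)) :=
        Real.sqrt_le_sqrt (by linarith)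
      rwa [Real.sqrt_mul (by norm_num) ((n:ℝ)+1), Real.sqrt_mul (by norm_num) (n:ℝ),
        hsqrt4, hsqrt9] at h0
    calc s / a n = s * (1 / a n) := by ring
      _ ≤ 1 * (2 * Real.sqrt ((n : ℝ) + 1)) :=
          mul_le_mul hs1 hinv (one_div_nonneg.mpr (hapos n).le) (by norm_num)
      _ = 2 * Real.sqrt ((n : ℝ) + 1) := by ring
      _ ≤ 3 * Real.sqrt (n : ℝ) := h2s
  -- bound B3
  have hrpos : (0 : ℝ) < (n : ℝ) ^ (σ + 1 / 2) := by positivity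
  have hAa : ‖A‖ ≤ c₂ / (n : ℝ) ^ (σ + 1 / 2) := by
    have h1 : ‖A‖ = ‖pip G (p (n - k)) (Gq (n + 1))‖ := by
      rw [hA, pip_conj_symm G (Gq (n + 1)) (p (n - k)), Complex.norm_conj]
    have h2 : ‖pip G (p (n - k)) (Gq (n + 1))‖
        ≤ c₂ / ((n + 1 : ℕ) : ℝ) ^ (σ + 1 / 2) := hii (n - k) (n + 1) (by omega)
    have h3 : (n : ℝ) ^ (σ + 1 / 2) ≤ ((n + 1 : ℕ) : ℝ) ^ (σ + 1 / 2) := by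
      apply Real.rpow_le_rpow (by positivity) _ (by linarith)
      push_cast; linarith
    calc ‖A‖ = ‖pip G (p (n - k)) (Gq (n + 1))‖ := h1
      _ ≤ c₂ / ((n + 1 : ℕ) : ℝ) ^ (σ + 1 / 2) := h2
      _ ≤ c₂ / (n : ℝ) ^ (σ + 1 / 2) := div_le_div_of_nonneg_left hc₂ hrpos h3
  have hSa : ‖S‖
      ≤ (k : ℝ) * (M * (c₂ * ((k : ℝ) + 1) ^ (σ + 1 / 2))) / (n : ℝ) ^ (σ + 1 / 2) := by
    have hterm : ∀ j ∈ Finset.range k,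
        ‖bs j * pip G (Gq (n - j)) (p (n - k))‖
          ≤ M * (c₂ * ((k : ℝ) + 1) ^ (σ + 1 / 2) / (n : ℝ) ^ (σ + 1 / 2)) := by
      intro j hj
      rw [Finset.mem_range] at hj
      rw [norm_mul]
      have hpj : ‖pip G (Gq (n - j)) (p (n - k))‖
          ≤ c₂ * ((k : ℝ) + 1) ^ (σ + 1 / 2) / (n : ℝ) ^ (σ + 1 / 2) := by
        have h1 : ‖pip G (Gq (n - j)) (p (n - k))‖
            = ‖pip G (p (n - k)) (Gq (n - j))‖ := by
          rw [pip_conj_symm G (Gq (n - j)) (p (n - k)), Complex.norm_conj]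
        have h2 : ‖pip G (p (n - k)) (Gq (n - j))‖
            ≤ c₂ / ((n - j : ℕ) : ℝ) ^ (σ + 1 / 2) := hii (n - k) (n - j) (by omega)
        have h3 : (n : ℝ) ≤ ((k : ℝ) + 1) * ((n - j : ℕ) : ℝ) := by
          have : ((n - k : ℕ) : ℝ) ≤ ((n - j : ℕ) : ℝ) := by
            exact_mod_cast (by omega : n - k ≤ n - j)
          nlinarith
        calc ‖pip G (Gq (n - j)) (p (n - k))‖
            = ‖pip G (p (n - k)) (Gq (n - j))‖ := h1
          _ ≤ c₂ / ((n - j : ℕ) : ℝ) ^ (σ + 1 / 2) := h2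
          _ ≤ c₂ * ((k : ℝ) + 1) ^ (σ + 1 / 2) / (n : ℝ) ^ (σ + 1 / 2) :=
              hfrac c₂ hc₂ (σ + 1 / 2) (by linarith) (n - j) h3
      exact mul_le_mul (hbsM j) hpj (norm_nonneg _) hM0
    rw [hS]
    calc ‖∑ j ∈ Finset.range k, bs j * pip G (Gq (n - j)) (p (n - k))‖
        ≤ ∑ j ∈ Finset.range k,
          ‖bs j * pip G (Gq (n - j)) (p (n - k))‖ :=
        norm_sum_le _ _
      _ ≤ ∑ _j ∈ Finset.range k,
          M * (c₂ * ((k : ℝ) + 1) ^ (σ + 1 / 2) / (n : ℝ) ^ (σ + 1 / 2)) :=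
        Finset.sum_le_sum hterm
      _ = (k : ℝ) * (M * (c₂ * ((k : ℝ) + 1) ^ (σ + 1 / 2) / (n : ℝ) ^ (σ + 1 / 2))) := by
          rw [Finset.sum_const, Finset.card_range, nsmul_eq_mul]
      _ = (k : ℝ) * (M * (c₂ * ((k : ℝ) + 1) ^ (σ + 1 / 2))) / (n : ℝ) ^ (σ + 1 / 2) := by
          ring
  have hTa : ‖T‖ ≤ c₃ / (n : ℝ) ^ (σ + 1 / 2) := by
    have h0 := hiii n hkn
    have h1 : T = ∫ z in G,
        z * ((Gq n - Polynomial.C ((γ : ℂ) ^ (n + 1) / (lam n : ℂ)) * p n).eval z) *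
          (starRingEnd ℂ) ((p (n - k)).eval z) := by
      rw [hT]; simp [pip]
    rw [h1]
    exact h0
  have habsE : ‖E‖ ≤ K₂ / (n : ℝ) ^ (σ + 1 / 2) := by
    have hγinv : ‖(γ : ℂ)⁻¹‖ = γ⁻¹ := by
      rw [norm_inv, Complex.norm_real, Real.norm_eq_abs, abs_of_pos hγ]
    have h1 : ‖E‖ ≤ γ⁻¹ * ‖A‖ + ‖S‖ + ‖T‖ := by
      rw [hE, sub_eq_add_neg]
      refine le_trans (norm_add_le _ _) ?_
      have h2 := norm_add_le ((γ : ℂ)⁻¹ * A) S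
      rw [norm_mul, hγinv] at h2
      have h3 : ‖-T‖ = ‖T‖ := norm_neg T
      linarith
    have h2 : γ⁻¹ * ‖A‖ ≤ γ⁻¹ * (c₂ / (n : ℝ) ^ (σ + 1 / 2)) :=
      mul_le_mul_of_nonneg_left hAa (by positivity)
    rw [hK₂]
    calc ‖E‖ ≤ γ⁻¹ * ‖A‖ + ‖S‖ + ‖T‖ := h1
      _ ≤ γ⁻¹ * (c₂ / (n : ℝ) ^ (σ + 1 / 2))
          + (k : ℝ) * (M * (c₂ * ((k : ℝ) + 1) ^ (σ + 1 / 2))) / (n : ℝ) ^ (σ + 1 / 2)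
          + c₃ / (n : ℝ) ^ (σ + 1 / 2) := by
          exact add_le_add (add_le_add h2 hSa) hTa
      _ = (γ⁻¹ * c₂ + (k : ℝ) * (M * (c₂ * ((k : ℝ) + 1) ^ (σ + 1 / 2))) + c₃)
          / (n : ℝ) ^ (σ + 1 / 2) := by ring
  -- final assembly
  have hsplit : (n : ℝ) ^ (σ + 1 / 2) = (n : ℝ) ^ σ * Real.sqrt (n : ℝ) := by
    rw [Real.rpow_add hnpos, Real.sqrt_eq_rpow]
  have hsn0 : (0 : ℝ) < Real.sqrt (n : ℝ) := Real.sqrt_pos.mpr hnpos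
  have hσpos : (0 : ℝ) < (n : ℝ) ^ σ := by positivity
  calc ‖(s : ℂ) * I - bs k‖
      ≤ |u (n - k) / u n - 1| * ‖bs k‖ + (s / a n) * ‖E‖ := habs
    _ ≤ (K₁ / (n : ℝ) ^ σ) * ‖bs k‖
        + (3 * Real.sqrt (n : ℝ)) * (K₂ / (n : ℝ) ^ (σ + 1 / 2)) := by
        refine add_le_add (mul_le_mul_of_nonneg_right hB1 (norm_nonneg _)) ?_
        exact mul_le_mul hB2 habsE (norm_nonneg _) (by positivity)
    _ = (‖bs k‖ * K₁ + 3 * K₂) / (n : ℝ) ^ σ := by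
        rw [hsplit]
        field_simp
end

section
/- (Claim (6.27) in the proof of Theorem 2.3.) Let 0 < ϱ < 1. There exists a constant c, depending only on ϱ, with the following property: for every integer j ≥ 1, all complex numbers A_1, …, A_j and a_1, a_2, a_3, … satisfying ∑_{ν=1}^{j} ν·|A_ν|² + ∑_{ν=1}^{∞} ν·|a_ν|²·ϱ^{−2ν} ≤ ϱ^{2j+2}/((j+1)·(1−ϱ^{2j})), and every w ∈ ℂ with |w| = 1, one has |∑_{ν=1}^{j} A_ν·w^ν + ∑_{ν=1}^{∞} a_ν·w^{−ν}| ≤ c·√(log(j+1)/(j+1))·ϱ^j. -/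
open MeasureTheory

/-- claim (6.27): there is a constant `c = c(ϱ)` such that for every `j ≥ 1`,
all coefficients `A_ν`, `a_ν` satisfying the weighted-square bound, and every `w` with
`|w| = 1`, one has
`|∑_{ν=1}^{j} A_ν w^ν + ∑_{ν=1}^{∞} a_ν w^{−ν}| ≤ c·√(log(j+1)/(j+1))·ϱ^j`. -/
theorem claim_6_27 (ϱ : ℝ) (hϱ₀ : 0 < ϱ) (hϱ₁ : ϱ < 1) :
    ∃ c : ℝ, ∀ (j : ℕ), 1 ≤ j → ∀ (A a : ℕ → ℂ),
      Summable (fun ν : ℕ => ((ν : ℝ) + 1) * ‖a (ν + 1)‖ ^ 2 / ϱ ^ (2 * (ν + 1))) →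
      (∑ ν ∈ Finset.Icc 1 j, (ν : ℝ) * ‖A ν‖ ^ 2) +
          (∑' ν : ℕ, ((ν : ℝ) + 1) * ‖a (ν + 1)‖ ^ 2 / ϱ ^ (2 * (ν + 1)))
        ≤ ϱ ^ (2 * j + 2) / (((j : ℝ) + 1) * (1 - ϱ ^ (2 * j))) →
      ∀ w : ℂ, ‖w‖ = 1 →
        ‖(∑ ν ∈ Finset.Icc 1 j, A ν * w ^ ν) +
            ∑' ν : ℕ, a (ν + 1) * w ^ (-((ν : ℤ) + 1))‖
          ≤ c * Real.sqrt (Real.log ((j : ℝ) + 1) / ((j : ℝ) + 1)) * ϱ ^ j := by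
  have h2 : (0:ℝ) < Real.log 2 := Real.log_pos (by norm_num)
  have hϱ2 : ϱ^2 < 1 := by nlinarith
  have h1ϱ2 : (0:ℝ) < 1 - ϱ^2 := by linarith
  have h1ϱ : (0:ℝ) < 1 - ϱ := by linarith
  set K : ℝ := ϱ / (1 - ϱ) with hKdef
  have hK0 : 0 ≤ K := le_of_lt (div_pos hϱ₀ h1ϱ)
  refine ⟨(ϱ / Real.sqrt (1 - ϱ^2)) *
      (Real.sqrt (1 + 1/Real.log 2) + K / Real.sqrt (Real.log 2)), ?_⟩
  intro j hj A a hsm hS w hw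
  set S := (∑ ν ∈ Finset.Icc 1 j, (ν : ℝ) * ‖A ν‖ ^ 2) +
      (∑' ν : ℕ, ((ν : ℝ) + 1) * ‖a (ν + 1)‖ ^ 2 / ϱ ^ (2 * (ν + 1))) with hSdef
  have hterm : ∀ ν:ℕ, 0 ≤ ((ν : ℝ) + 1) * ‖a (ν + 1)‖ ^ 2 / ϱ ^ (2 * (ν + 1)) := by
    intro ν
    apply div_nonneg (mul_nonneg (by positivity) (sq_nonneg _)) (by positivity)
  have hfin0 : 0 ≤ ∑ ν ∈ Finset.Icc 1 j, (ν:ℝ) * ‖A ν‖ ^ 2 :=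
    Finset.sum_nonneg fun ν _ => mul_nonneg (by positivity) (sq_nonneg _)
  have htsum0 : 0 ≤ ∑' ν : ℕ, ((ν : ℝ) + 1) * ‖a (ν + 1)‖ ^ 2 / ϱ ^ (2 * (ν + 1)) :=
    tsum_nonneg hterm
  have hS0 : 0 ≤ S := add_nonneg hfin0 htsum0
  have hsS0 : 0 ≤ Real.sqrt S := Real.sqrt_nonneg S
  -- termwise bound on the a's
  have ha : ∀ ν:ℕ, ‖a (ν+1)‖ ≤ Real.sqrt S * ϱ^(ν+1) := by
    intro ν
    have h1 : ((ν : ℝ) + 1) * ‖a (ν + 1)‖ ^ 2 / ϱ ^ (2 * (ν + 1)) ≤ S := by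
      have := Summable.le_tsum hsm ν (fun i _ => hterm i)
      linarith
    have hp : (0:ℝ) < ϱ ^ (2*(ν+1)) := pow_pos hϱ₀ _
    rw [div_le_iff₀ hp] at h1
    have h2' : ‖a (ν+1)‖^2 ≤ S * ϱ^(2*(ν+1)) := by
      nlinarith [sq_nonneg (‖a (ν+1)‖)]
    have hpow : ϱ^(2*(ν+1)) = (ϱ^(ν+1))^2 := by rw [← pow_mul, Nat.mul_comm]
    calc ‖a (ν+1)‖ = Real.sqrt (‖a (ν+1)‖^2) :=
          (Real.sqrt_sq (norm_nonneg _)).symm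
      _ ≤ Real.sqrt (S * ϱ^(2*(ν+1))) := Real.sqrt_le_sqrt h2'
      _ = Real.sqrt S * ϱ^(ν+1) := by
          rw [Real.sqrt_mul hS0, hpow, Real.sqrt_sq (by positivity)]
  -- geometric majorant
  have hgeq : (fun ν:ℕ => Real.sqrt S * ϱ^(ν+1)) = fun ν:ℕ => (Real.sqrt S * ϱ) * ϱ^ν := by
    funext ν; ring
  have hgeo : HasSum (fun ν:ℕ => Real.sqrt S * ϱ^(ν+1)) (Real.sqrt S * (ϱ/(1-ϱ))) := by
    rw [hgeq]
    have := (hasSum_geometric_of_lt_one hϱ₀.le hϱ₁).mul_left (Real.sqrt S * ϱ)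
    rw [show Real.sqrt S * (ϱ/(1-ϱ)) = Real.sqrt S * ϱ * (1-ϱ)⁻¹ by ring]
    exact this
  have hnorm : ∀ ν:ℕ, ‖a (ν + 1) * w ^ (-((ν : ℤ) + 1))‖ ≤ Real.sqrt S * ϱ^(ν+1) := by
    intro ν
    rw [norm_mul, norm_zpow, hw, one_zpow, mul_one]
    exact ha ν
  have hB : ‖∑' ν : ℕ, a (ν + 1) * w ^ (-((ν : ℤ) + 1))‖
      ≤ Real.sqrt S * K := by
    exact tsum_of_norm_bounded hgeo hnorm
  -- harmonic-sum bound
  have hharm : ∑ ν ∈ Finset.Icc 1 j, ((ν:ℝ))⁻¹ ≤ 1 + Real.log j := by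
    have h2' : (harmonic j : ℝ) = ∑ i ∈ Finset.range j, (((i:ℝ))+1)⁻¹ := by
      rw [harmonic]
      push_cast
      rfl
    have h1 : ∑ ν ∈ Finset.Icc 1 j, ((ν:ℝ))⁻¹ = (harmonic j : ℝ) := by
      rw [h2', ← Finset.Ico_add_one_right_eq_Icc, Finset.sum_Ico_eq_sum_range]
      refine Finset.sum_congr (by norm_num) (fun i _ => by push_cast; ring_nf)
    rw [h1]
    exact harmonic_le_one_add_log j
  -- Cauchy–Schwarz on the finite sum
  have hCS : (∑ ν ∈ Finset.Icc 1 j, ‖A ν‖)^2 ≤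
      (∑ ν ∈ Finset.Icc 1 j, (ν:ℝ) * ‖A ν‖ ^ 2) *
      (∑ ν ∈ Finset.Icc 1 j, ((ν:ℝ))⁻¹) := by
    have := Finset.sum_mul_sq_le_sq_mul_sq (Finset.Icc 1 j)
      (fun ν => Real.sqrt ν * ‖A ν‖) (fun ν => (Real.sqrt ν)⁻¹)
    have e1 : ∑ ν ∈ Finset.Icc 1 j,
        (Real.sqrt ν * ‖A ν‖) * (Real.sqrt ν)⁻¹ =
        ∑ ν ∈ Finset.Icc 1 j, ‖A ν‖ := by
      refine Finset.sum_congr rfl (fun ν hν => ?_)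
      have hν1 : 1 ≤ ν := (Finset.mem_Icc.mp hν).1
      have : (0:ℝ) < Real.sqrt ν := Real.sqrt_pos.mpr (by exact_mod_cast hν1)
      field_simp
    have e2 : ∑ ν ∈ Finset.Icc 1 j, (Real.sqrt ν * ‖A ν‖)^2 =
        ∑ ν ∈ Finset.Icc 1 j, (ν:ℝ) * ‖A ν‖ ^ 2 := by
      refine Finset.sum_congr rfl (fun ν _ => ?_)
      rw [mul_pow, Real.sq_sqrt (Nat.cast_nonneg ν)]
    have e3 : ∑ ν ∈ Finset.Icc 1 j, ((Real.sqrt ν)⁻¹)^2 =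
        ∑ ν ∈ Finset.Icc 1 j, ((ν:ℝ))⁻¹ := by
      refine Finset.sum_congr rfl (fun ν _ => ?_)
      rw [← Real.sqrt_inv, Real.sq_sqrt (by positivity)]
    rw [e1, e2, e3] at this
    exact this
  have hlogj0 : (0:ℝ) ≤ 1 + Real.log j := by
    have : (0:ℝ) ≤ Real.log j := Real.log_nonneg (by exact_mod_cast hj)
    linarith
  have hAfin : ‖∑ ν ∈ Finset.Icc 1 j, A ν * w ^ ν‖ ≤
      Real.sqrt S * Real.sqrt (1 + Real.log j) := by
    have h1 : ‖∑ ν ∈ Finset.Icc 1 j, A ν * w ^ ν‖ ≤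
        ∑ ν ∈ Finset.Icc 1 j, ‖A ν‖ := by
      calc ‖∑ ν ∈ Finset.Icc 1 j, A ν * w ^ ν‖
          ≤ ∑ ν ∈ Finset.Icc 1 j, ‖A ν * w ^ ν‖ :=
            norm_sum_le _ _
        _ = ∑ ν ∈ Finset.Icc 1 j, ‖A ν‖ := by
            refine Finset.sum_congr rfl (fun ν _ => ?_)
            rw [norm_mul, norm_pow, hw, one_pow, mul_one]
    have h2' : (∑ ν ∈ Finset.Icc 1 j, ‖A ν‖)^2 ≤ S * (1 + Real.log j) := by
      have hfle : (∑ ν ∈ Finset.Icc 1 j, (ν:ℝ) * ‖A ν‖ ^ 2) ≤ S := by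
        rw [hSdef]; linarith
      calc (∑ ν ∈ Finset.Icc 1 j, ‖A ν‖)^2
          ≤ (∑ ν ∈ Finset.Icc 1 j, (ν:ℝ) * ‖A ν‖ ^ 2) *
            (∑ ν ∈ Finset.Icc 1 j, ((ν:ℝ))⁻¹) := hCS
        _ ≤ S * (1 + Real.log j) := by
            apply mul_le_mul hfle hharm (Finset.sum_nonneg fun ν _ => by positivity) hS0
    have h3 : ∑ ν ∈ Finset.Icc 1 j, ‖A ν‖ ≤
        Real.sqrt (S * (1 + Real.log j)) := by
      have h0 : 0 ≤ ∑ ν ∈ Finset.Icc 1 j, ‖A ν‖ :=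
        Finset.sum_nonneg fun ν _ => norm_nonneg _
      calc ∑ ν ∈ Finset.Icc 1 j, ‖A ν‖
          = Real.sqrt ((∑ ν ∈ Finset.Icc 1 j, ‖A ν‖)^2) :=
            (Real.sqrt_sq h0).symm
        _ ≤ Real.sqrt (S * (1 + Real.log j)) := Real.sqrt_le_sqrt h2'
    calc ‖∑ ν ∈ Finset.Icc 1 j, A ν * w ^ ν‖
        ≤ ∑ ν ∈ Finset.Icc 1 j, ‖A ν‖ := h1
      _ ≤ Real.sqrt (S * (1 + Real.log j)) := h3
      _ = Real.sqrt S * Real.sqrt (1 + Real.log j) := Real.sqrt_mul hS0 _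
  -- bound on sqrt S
  have hj1 : (0:ℝ) < (j:ℝ) + 1 := by positivity
  have hϱ2j : ϱ^(2*j) ≤ ϱ^2 := pow_le_pow_of_le_one hϱ₀.le hϱ₁.le (by omega)
  have hSle : S ≤ ϱ^(2*j+2) / (((j:ℝ)+1) * (1 - ϱ^2)) := by
    refine le_trans hS ?_
    apply div_le_div_of_nonneg_left (by positivity) (by positivity)
    apply mul_le_mul_of_nonneg_left (by linarith) hj1.le
  have hsqS : Real.sqrt S ≤ ϱ^(j+1) / (Real.sqrt ((j:ℝ)+1) * Real.sqrt (1 - ϱ^2)) := by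
    calc Real.sqrt S ≤ Real.sqrt (ϱ^(2*j+2) / (((j:ℝ)+1) * (1 - ϱ^2))) :=
          Real.sqrt_le_sqrt hSle
      _ = ϱ^(j+1) / (Real.sqrt ((j:ℝ)+1) * Real.sqrt (1 - ϱ^2)) := by
          rw [Real.sqrt_div (by positivity), Real.sqrt_mul hj1.le]
          congr 1
          rw [show 2*j+2 = (j+1)*2 by ring, pow_mul, Real.sqrt_sq (by positivity)]
  -- logs
  set L : ℝ := Real.log ((j:ℝ)+1) with hLdef
  have hL2 : Real.log 2 ≤ L := by
    apply Real.log_le_log (by norm_num)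
    have : (1:ℝ) ≤ (j:ℝ) := by exact_mod_cast hj
    linarith
  have hL0 : 0 < L := lt_of_lt_of_le h2 hL2
  have hkey : Real.sqrt (1 + Real.log j) + K ≤
      Real.sqrt (1 + 1/Real.log 2) * Real.sqrt L + K / Real.sqrt (Real.log 2) * Real.sqrt L := by
    have hb1 : Real.sqrt (1 + Real.log j) ≤ Real.sqrt (1 + 1/Real.log 2) * Real.sqrt L := by
      rw [← Real.sqrt_mul (by positivity)]
      apply Real.sqrt_le_sqrt
      have hlogjL : Real.log j ≤ L := by
        apply Real.log_le_log (by exact_mod_cast hj)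
        linarith
      have h1L : 1 ≤ L / Real.log 2 := (one_le_div h2).mpr hL2
      have : (1 + 1/Real.log 2) * L = L + L/Real.log 2 := by ring
      rw [this]
      have : (1:ℝ) ≤ L / Real.log 2 := h1L
      linarith
    have hb2 : K ≤ K / Real.sqrt (Real.log 2) * Real.sqrt L := by
      rw [div_mul_eq_mul_div, le_div_iff₀ (Real.sqrt_pos.mpr h2)]
      apply mul_le_mul_of_nonneg_left _ hK0
      exact Real.sqrt_le_sqrt hL2
    linarith
  -- assemble
  have hfac0 : 0 ≤ Real.sqrt (1 + Real.log j) + K := by positivity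
  have htot : ‖(∑ ν ∈ Finset.Icc 1 j, A ν * w ^ ν) +
      ∑' ν : ℕ, a (ν + 1) * w ^ (-((ν : ℤ) + 1))‖ ≤
      Real.sqrt S * (Real.sqrt (1 + Real.log j) + K) := by
    calc ‖_‖ ≤ ‖∑ ν ∈ Finset.Icc 1 j, A ν * w ^ ν‖ +
          ‖∑' ν : ℕ, a (ν + 1) * w ^ (-((ν : ℤ) + 1))‖ := norm_add_le _ _
      _ ≤ Real.sqrt S * Real.sqrt (1 + Real.log j) + Real.sqrt S * K := add_le_add hAfin hB
      _ = Real.sqrt S * (Real.sqrt (1 + Real.log j) + K) := by ring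
  refine le_trans htot ?_
  have hQ : Real.sqrt S * (Real.sqrt (1 + Real.log j) + K) ≤
      (ϱ^(j+1) / (Real.sqrt ((j:ℝ)+1) * Real.sqrt (1 - ϱ^2))) *
      (Real.sqrt (1 + 1/Real.log 2) * Real.sqrt L + K / Real.sqrt (Real.log 2) * Real.sqrt L) := by
    apply mul_le_mul hsqS hkey hfac0 (by positivity)
  refine le_trans hQ (le_of_eq ?_)
  rw [Real.sqrt_div hL0.le]
  have hsj : (0:ℝ) < Real.sqrt ((j:ℝ)+1) := Real.sqrt_pos.mpr hj1
  have hs2 : (0:ℝ) < Real.sqrt (1 - ϱ^2) := Real.sqrt_pos.mpr h1ϱ2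
  field_simp
  ring
end

section
/- (Core lemma in the proof of Theorem 2.4.) Let (α_n)_{n≥1} be a sequence of real numbers with 0 ≤ α_n < 1 for all n and α_n → 0 as n → ∞. Define ξ_n := √((1−α_{n+1})/(1−α_n)) − 1. If limsup_{n→∞} |ξ_n|^{1/n} < 1, then limsup_{n→∞} α_n^{1/n} < 1. -/
/-- core lemma in the proof of Theorem 2.4: if `0 ≤ α_n < 1`, `α_n → 0`,
and `ξ_n := √((1−α_{n+1})/(1−α_n)) − 1` satisfies `limsup |ξ_n|^{1/n} < 1`, then
`limsup α_n^{1/n} < 1`. -/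
theorem limsup_alpha_root_lt_one
    (α : ℕ → ℝ)
    (hα : ∀ n : ℕ, 1 ≤ n → 0 ≤ α n ∧ α n < 1)
    (hα0 : Filter.Tendsto α Filter.atTop (nhds 0))
    (ξ : ℕ → ℝ)
    (hξ : ∀ n : ℕ, 1 ≤ n → ξ n = Real.sqrt ((1 - α (n + 1)) / (1 - α n)) - 1)
    (h : Filter.limsup (fun n : ℕ => |ξ n| ^ ((n : ℝ)⁻¹)) Filter.atTop < 1) :
    Filter.limsup (fun n : ℕ => (α n) ^ ((n : ℝ)⁻¹)) Filter.atTop < 1 := by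
  set L := Filter.limsup (fun n : ℕ => |ξ n| ^ ((n : ℝ)⁻¹)) Filter.atTop with hLdef
  set r : ℝ := max ((L + 1) / 2) (1 / 2) with hrdef
  have hr1 : r < 1 := max_lt (by linarith) (by norm_num)
  have hr0 : (0:ℝ) < r := lt_of_lt_of_le (by norm_num) (le_max_right _ _)
  have hLr : L < r := lt_of_lt_of_le (by linarith) (le_max_left _ _)
  -- `ξ → 0`
  have hβ : Filter.Tendsto (fun n => 1 - α n) Filter.atTop (nhds 1) := by
    simpa using tendsto_const_nhds.sub hα0
  have hβ' : Filter.Tendsto (fun n => 1 - α (n + 1)) Filter.atTop (nhds 1) :=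
    hβ.comp (Filter.tendsto_add_atTop_nat 1)
  have hratio1 : Filter.Tendsto (fun n => (1 - α (n + 1)) / (1 - α n))
      Filter.atTop (nhds 1) := by
    simpa using (show Filter.Tendsto (fun n => (1 - α (n + 1)) / (1 - α n)) Filter.atTop
      (nhds (1 / 1)) from hβ'.div hβ one_ne_zero)
  have hξ0 : Filter.Tendsto ξ Filter.atTop (nhds 0) := by
    have hs : Filter.Tendsto (fun n => Real.sqrt ((1 - α (n + 1)) / (1 - α n)) - 1)
        Filter.atTop (nhds 0) := by
      have := hratio1.sqrt
      rw [Real.sqrt_one] at this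
      simpa using this.sub_const 1
    refine hs.congr' ?_
    filter_upwards [Filter.eventually_ge_atTop 1] with n hn
    exact (hξ n hn).symm
  -- boundedness above of `|ξ n| ^ (n⁻¹)`
  have hbdd : Filter.IsBoundedUnder (· ≤ ·) Filter.atTop
      (fun n : ℕ => |ξ n| ^ ((n : ℝ)⁻¹)) := by
    refine ⟨1, Filter.eventually_map.2 ?_⟩
    have habs : ∀ᶠ n in Filter.atTop, |ξ n| ≤ 1 := by
      have := hξ0.abs
      rw [abs_zero] at this
      exact this.eventually_le_const one_pos
    filter_upwards [habs] with n hn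
    exact Real.rpow_le_one (abs_nonneg _) hn (by positivity)
  have hev : ∀ᶠ n in Filter.atTop, |ξ n| ^ ((n:ℝ)⁻¹) < r :=
    Filter.eventually_lt_of_limsup_lt hLr hbdd
  obtain ⟨N₀, hN₀⟩ := Filter.eventually_atTop.mp hev
  set N : ℕ := max N₀ 1 with hNdef
  have hN1 : 1 ≤ N := le_max_right _ _
  have hξ_bound : ∀ n, N ≤ n → |ξ n| ≤ r ^ n := by
    intro n hn
    have hn1 : 1 ≤ n := le_trans hN1 hn
    have h1 := hN₀ n (le_trans (le_max_left _ _) hn)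
    calc |ξ n| = (|ξ n| ^ ((n:ℝ)⁻¹)) ^ n :=
          (Real.rpow_inv_natCast_pow (abs_nonneg _) (by omega)).symm
      _ ≤ r ^ n := pow_le_pow_left₀ (Real.rpow_nonneg (abs_nonneg _) _) h1.le n
  have hrel : ∀ n, 1 ≤ n → 1 - α (n+1) = (1 - α n) * (1 + ξ n)^2 := by
    intro n hn
    have h1 := hα n hn
    have h2 := hα (n+1) (by omega)
    have hb : 0 < 1 - α n := by linarith [h1.2]
    have hb2 : 0 ≤ (1 - α (n+1))/(1 - α n) := div_nonneg (by linarith [h2.2]) hb.le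
    have hsq : (1 + ξ n)^2 = (1 - α (n+1))/(1 - α n) := by
      rw [hξ n hn]
      have heq : 1 + (Real.sqrt ((1 - α (n + 1)) / (1 - α n)) - 1)
          = Real.sqrt ((1 - α (n + 1)) / (1 - α n)) := by ring
      rw [heq, Real.sq_sqrt hb2]
    rw [hsq]
    field_simp
  have hstep : ∀ n, N ≤ n → 1 - α (n+1) ≤ (1 - α n) + 3 * r ^ n := by
    intro n hn
    have hn1 : 1 ≤ n := le_trans hN1 hn
    have hb := hα n hn1
    have habs := abs_le.mp (hξ_bound n hn)
    have hrn0 : (0:ℝ) ≤ r ^ n := pow_nonneg hr0.le n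
    have hrn1 : r ^ n ≤ 1 := pow_le_one₀ hr0.le hr1.le
    rw [hrel n hn1]
    nlinarith [hb.1, hb.2, habs.1, habs.2, hrn0, hrn1, sq_nonneg (ξ n),
      mul_nonneg (mul_nonneg (sub_nonneg.2 habs.2)
        (by linarith [habs.1] : (0:ℝ) ≤ r ^ n + ξ n)) (by linarith [hb.2] : (0:ℝ) ≤ 1 - α n),
      mul_nonneg (sub_nonneg.2 hrn1) hrn0,
      mul_nonneg hb.1 (sub_nonneg.2 habs.2),
      mul_nonneg hb.1 (by linarith [habs.1] : (0:ℝ) ≤ r ^ n + ξ n),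
      mul_nonneg (by linarith [hb.2] : (0:ℝ) ≤ 1 - α n) (sub_nonneg.2 habs.2),
      mul_nonneg hb.1 (mul_nonneg hrn0 hrn0)]
  have key : ∀ n, N ≤ n → ∀ m, n ≤ m →
      1 - α m ≤ (1 - α n) + 3 * ((r^n - r^m) / (1 - r)) := by
    intro n hn m hm
    induction m, hm using Nat.le_induction with
    | base => simp
    | succ m hm ih =>
      have hs := hstep m (le_trans hn hm)
      have hid : (r^n - r^m)/(1-r) + r^m = (r^n - r^(m+1))/(1-r) := by
        have h1r : (1:ℝ) - r ≠ 0 := by linarith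
        field_simp
        ring
      linarith
  have hαb : ∀ n, N ≤ n → α n ≤ 3 * (r^n / (1-r)) := by
    intro n hn
    have h1r : (0:ℝ) < 1 - r := by linarith
    have hevm : ∀ᶠ m in Filter.atTop, 1 - α m ≤ (1 - α n) + 3 * (r^n / (1-r)) := by
      filter_upwards [Filter.eventually_ge_atTop n] with m hm
      have hk := key n hn m hm
      have hrm : (0:ℝ) ≤ r ^ m := pow_nonneg hr0.le m
      have h2 : (r^n - r^m)/(1-r) ≤ r^n/(1-r) := by
        gcongr
        linarith
      linarith
    have := le_of_tendsto hβ hevm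
    linarith
  set r' : ℝ := (1 + r)/2 with hr'def
  have hr'0 : (0:ℝ) < r' := by rw [hr'def]; linarith
  have hrr' : r < r' := by rw [hr'def]; linarith
  have hr'1 : r' < 1 := by rw [hr'def]; linarith
  have hratio : Filter.Tendsto (fun n : ℕ => 3/(1-r) * (r/r')^n) Filter.atTop (nhds 0) := by
    have h1 := tendsto_pow_atTop_nhds_zero_of_lt_one
      (div_nonneg hr0.le hr'0.le) ((div_lt_one hr'0).2 hrr')
    simpa using h1.const_mul (3/(1-r))
  have hev2 : ∀ᶠ n in Filter.atTop, 3/(1-r) * (r/r')^n ≤ 1 :=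
    hratio.eventually_le_const one_pos
  have hev3 : ∀ᶠ n in Filter.atTop, α n ^ ((n:ℝ)⁻¹) ≤ r' := by
    filter_upwards [hev2, Filter.eventually_ge_atTop N, Filter.eventually_ge_atTop 1]
      with n h1 h2 h3
    have hαn0 := (hα n h3).1
    have hr'n : (0:ℝ) < r'^n := pow_pos hr'0 n
    have h1r : (0:ℝ) < 1 - r := by linarith
    have hmul : 3 * (r^n / (1-r)) ≤ r'^n := by
      have hdp : (r/r')^n = r^n / r'^n := div_pow r r' n
      rw [hdp] at h1
      have h4 := mul_le_mul_of_nonneg_right h1 hr'n.le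
      have heq : 3/(1-r) * (r^n/r'^n) * r'^n = 3 * (r^n/(1-r)) := by
        field_simp
      rw [heq, one_mul] at h4
      exact h4
    have hαrn : α n ≤ r'^n := le_trans (hαb n h2) hmul
    calc α n ^ ((n:ℝ)⁻¹) ≤ (r'^n) ^ ((n:ℝ)⁻¹) :=
          Real.rpow_le_rpow hαn0 hαrn (by positivity)
      _ = r' := by
          rw [← Real.rpow_natCast r' n, ← Real.rpow_mul hr'0.le,
            mul_inv_cancel₀ (by exact_mod_cast (by omega : n ≠ 0)), Real.rpow_one]
  have hcob : Filter.IsCoboundedUnder (· ≤ ·) Filter.atTop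
      (fun n : ℕ => (α n) ^ ((n : ℝ)⁻¹)) := by
    refine Filter.isCoboundedUnder_le_of_eventually_le Filter.atTop (x := 0) ?_
    filter_upwards [Filter.eventually_ge_atTop 1] with n hn
    exact Real.rpow_nonneg (hα n hn).1 _
  exact lt_of_le_of_lt (Filter.limsup_le_of_le hcob hev3) hr'1
end

section
/- (Theorem 4.1, conditional form.) Let 0 < ϱ < 1 and c_1, c_2, c_3 ≥ 0. Suppose b, b_0, b_1, b_2, … are complex numbers with |b_k| ≤ c_1·ϱ^k/√k for all k ≥ 1, and set Ψ(w) := b·w + b_0 + ∑_{k=1}^{∞} b_k·w^{−k} (the series converges for |w| ≥ 1). Then there exist constants C_1, C_2, depending only on ϱ, c_1, c_2, c_3, such that: for every integer m ≥ 2, setting n := 2m, for all complex numbers β, β_0, …, β_m satisfying |β − b| ≤ c_2·ϱ^{4m} and |β_k − b_k| ≤ c_3·√(n·log n)·ϱ^n for 0 ≤ k ≤ m, setting Ψ_m^{(n)}(w) := β·w + β_0 + ∑_{k=1}^{m} β_k·w^{−k}, one has for every w ∈ ℂ with |w| ≥ 1: |Ψ(w) − Ψ_m^{(n)}(w)| ≤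 C_1·√(m·log m)·ϱ^m + C_2·|w|·ϱ^{4m}. -/
/-- Theorem 4.1, conditional form: if `|b_k| ≤ c_1·ϱ^k/√k` for `k ≥ 1`, then
there are constants `C_1, C_2`, depending only on `ϱ, c_1, c_2, c_3`, such that for every
`m ≥ 2`, `n := 2m`, and approximations `β, β_0, …, β_m` with `|β − b| ≤ c_2·ϱ^{4m}` and
`|β_k − b_k| ≤ c_3·√(n·log n)·ϱ^n` for `0 ≤ k ≤ m`, one has for every `|w| ≥ 1`:
`|Ψ(w) − Ψ_m^{(n)}(w)| ≤ C_1·√(m·log m)·ϱ^m + C_2·|w|·ϱ^{4m}`. -/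
theorem recovery_algorithm_estimate
    (ϱ : ℝ) (hϱ₀ : 0 < ϱ) (hϱ₁ : ϱ < 1)
    (c₁ c₂ c₃ : ℝ) (hc₁ : 0 ≤ c₁) (hc₂ : 0 ≤ c₂) (hc₃ : 0 ≤ c₃)
    (b : ℂ) (bs : ℕ → ℂ)
    (hbs : ∀ k : ℕ, 1 ≤ k → ‖bs k‖ ≤ c₁ * ϱ ^ k / Real.sqrt k) :
    ∃ C₁ C₂ : ℝ, ∀ m : ℕ, 2 ≤ m →
      ∀ (β : ℂ) (βs : ℕ → ℂ),
        ‖β - b‖ ≤ c₂ * ϱ ^ (4 * m) →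
        (∀ k : ℕ, k ≤ m →
          ‖βs k - bs k‖ ≤
            c₃ * Real.sqrt (((2 * m : ℕ) : ℝ) * Real.log ((2 * m : ℕ) : ℝ)) * ϱ ^ (2 * m)) →
        ∀ w : ℂ, 1 ≤ ‖w‖ →
          ‖(b * w + bs 0 + ∑' k : ℕ, bs (k + 1) * w ^ (-((k : ℤ) + 1))) -
              (β * w + βs 0 + ∑ k ∈ Finset.Icc 1 m, βs k * w ^ (-(k : ℤ)))‖
            ≤ C₁ * Real.sqrt ((m : ℝ) * Real.log m) * ϱ ^ m +
                C₂ * ‖w‖ * ϱ ^ (4 * m) := by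
  have h1ϱ : 0 < 1 - ϱ := by linarith
  refine ⟨(2 * c₃ + c₁) / (1 - ϱ), c₂, ?_⟩
  intro m hm β βs hβ hβs w hw
  have hm2 : (2 : ℝ) ≤ (m : ℝ) := by exact_mod_cast hm
  have ht0 : (0 : ℝ) < ‖w‖ := lt_of_lt_of_le one_pos hw
  -- |w ^ j| ≤ 1 for j ≤ 0
  have hwz : ∀ j : ℤ, j ≤ 0 → ‖w ^ j‖ ≤ 1 := by
    intro j hj
    rw [norm_zpow]
    exact zpow_le_one_of_nonpos₀ hw hj
  -- the series terms and summability
  set f : ℕ → ℂ := fun j => bs (j + 1) * w ^ (-((j : ℤ) + 1)) with hf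
  have hfb : ∀ j : ℕ, ‖f j‖ ≤ c₁ * ϱ ^ (j + 1) := by
    intro j
    rw [hf, norm_mul]
    calc ‖bs (j + 1)‖ * ‖w ^ (-((j : ℤ) + 1))‖
        ≤ (c₁ * ϱ ^ (j + 1) / Real.sqrt (j + 1)) * 1 := by
          apply mul_le_mul (by exact_mod_cast hbs (j + 1) (Nat.le_add_left 1 j))
            (hwz _ (by omega)) (norm_nonneg _)
          positivity
      _ ≤ c₁ * ϱ ^ (j + 1) := by
          rw [mul_one]
          apply div_le_self (by positivity)
          rw [Real.one_le_sqrt]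
          exact_mod_cast Nat.le_add_left 1 j
  have hsum : Summable f := by
    refine Summable.of_norm_bounded (g := fun j => c₁ * ϱ ^ (j + 1)) ?_ hfb
    have h : Summable (fun j : ℕ => (c₁ * ϱ) * ϱ ^ j) :=
      (summable_geometric_of_lt_one hϱ₀.le hϱ₁).mul_left _
    exact h.congr (fun j => by ring)
  have hsplit := Summable.sum_add_tsum_nat_add (f := f) m hsum
  -- rewrite the finite sum of the approximation
  have hS : (∑ k ∈ Finset.Icc 1 m, βs k * w ^ (-(k : ℤ)))
      = ∑ j ∈ Finset.range m, βs (j + 1) * w ^ (-((j : ℤ) + 1)) := by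
    rw [show Finset.Icc 1 m = Finset.Ico 1 (m + 1) by rw [Finset.Ico_add_one_right_eq_Icc],
      Finset.sum_Ico_eq_sum_range]
    simp only [Nat.add_sub_cancel]
    refine Finset.sum_congr rfl fun j _ => ?_
    push_cast
    rw [add_comm 1 j, add_comm (1 : ℤ) (j : ℤ)]
  -- key decomposition
  have hkey : (b * w + bs 0 + ∑' k : ℕ, bs (k + 1) * w ^ (-((k : ℤ) + 1))) -
      (β * w + βs 0 + ∑ k ∈ Finset.Icc 1 m, βs k * w ^ (-(k : ℤ)))
      = (b - β) * w + (bs 0 - βs 0) +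
        (∑ j ∈ Finset.range m, (bs (j + 1) - βs (j + 1)) * w ^ (-((j : ℤ) + 1))) +
        (∑' j : ℕ, f (j + m)) := by
    rw [hS, show (∑' k : ℕ, bs (k + 1) * w ^ (-((k : ℤ) + 1))) = ∑' k, f k from rfl,
      ← hsplit]
    simp only [hf, sub_mul, Finset.sum_sub_distrib]
    ring
  rw [hkey]
  -- abbreviations
  set D : ℝ := c₃ * Real.sqrt (((2 * m : ℕ) : ℝ) * Real.log ((2 * m : ℕ) : ℝ)) * ϱ ^ (2 * m)
    with hD
  have hD0 : 0 ≤ D := by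
    rw [hD]; positivity
  -- bound each piece
  have hb1 : ‖(b - β) * w‖ ≤ c₂ * ϱ ^ (4 * m) * ‖w‖ := by
    rw [norm_mul]
    exact mul_le_mul_of_nonneg_right (by rw [← norm_sub_rev]; exact hβ)
      (norm_nonneg w)
  have hb2 : ‖bs 0 - βs 0‖ ≤ D := by
    rw [← norm_sub_rev]; exact hβs 0 (by omega)
  have hb3 : ‖∑ j ∈ Finset.range m,
      (bs (j + 1) - βs (j + 1)) * w ^ (-((j : ℤ) + 1))‖ ≤ m * D := by
    calc ‖∑ j ∈ Finset.range m, (bs (j + 1) - βs (j + 1)) * w ^ (-((j : ℤ) + 1))‖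
        ≤ ∑ j ∈ Finset.range m, ‖(bs (j + 1) - βs (j + 1)) * w ^ (-((j : ℤ) + 1))‖ :=
          norm_sum_le _ _
      _ ≤ ∑ _j ∈ Finset.range m, D := by
          apply Finset.sum_le_sum
          intro j hj
          rw [norm_mul]
          calc ‖bs (j + 1) - βs (j + 1)‖ * ‖w ^ (-((j : ℤ) + 1))‖
              ≤ D * 1 := by
                apply mul_le_mul ?_ (hwz _ (by omega)) (norm_nonneg _) hD0
                rw [← norm_sub_rev]
                exact hβs (j + 1) (by simp at hj; omega)
            _ = D := mul_one D
      _ = m * D := by rw [Finset.sum_const, Finset.card_range, nsmul_eq_mul]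
  have hb4 : ‖∑' j : ℕ, f (j + m)‖ ≤ c₁ * ϱ ^ m / (1 - ϱ) := by
    have hgs : HasSum (fun j : ℕ => (c₁ * ϱ ^ (m + 1)) * ϱ ^ j)
        ((c₁ * ϱ ^ (m + 1)) * (1 - ϱ)⁻¹) :=
      (hasSum_geometric_of_lt_one hϱ₀.le hϱ₁).mul_left _
    have := tsum_of_norm_bounded hgs (f := fun j => f (j + m)) ?_
    · refine le_trans this ?_
      rw [div_eq_mul_inv]
      apply mul_le_mul_of_nonneg_right ?_ (by positivity)
      rw [pow_succ]
      nlinarith [mul_nonneg (mul_nonneg hc₁ (pow_pos hϱ₀ m).le) h1ϱ.le]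
    · intro j
      calc ‖f (j + m)‖ ≤ c₁ * ϱ ^ (j + m + 1) := hfb (j + m)
        _ = (c₁ * ϱ ^ (m + 1)) * ϱ ^ j := by
            rw [show j + m + 1 = (m + 1) + j by omega, pow_add]; ring
  -- combine by triangle inequality
  have htri : ‖(b - β) * w + (bs 0 - βs 0) +
      (∑ j ∈ Finset.range m, (bs (j + 1) - βs (j + 1)) * w ^ (-((j : ℤ) + 1))) +
      (∑' j : ℕ, f (j + m))‖
      ≤ c₂ * ϱ ^ (4 * m) * ‖w‖ + D + m * D + c₁ * ϱ ^ m / (1 - ϱ) := by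
    calc _ ≤ ‖(b - β) * w + (bs 0 - βs 0) +
          (∑ j ∈ Finset.range m, (bs (j + 1) - βs (j + 1)) * w ^ (-((j : ℤ) + 1)))‖
          + ‖∑' j : ℕ, f (j + m)‖ := norm_add_le _ _
      _ ≤ (‖(b - β) * w + (bs 0 - βs 0)‖
          + ‖∑ j ∈ Finset.range m, (bs (j + 1) - βs (j + 1)) * w ^ (-((j : ℤ) + 1))‖)
          + ‖∑' j : ℕ, f (j + m)‖ := by
            gcongr; exact norm_add_le _ _
      _ ≤ ((‖(b - β) * w‖ + ‖bs 0 - βs 0‖)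
          + ‖∑ j ∈ Finset.range m, (bs (j + 1) - βs (j + 1)) * w ^ (-((j : ℤ) + 1))‖)
          + ‖∑' j : ℕ, f (j + m)‖ := by
            gcongr; exact norm_add_le _ _
      _ ≤ c₂ * ϱ ^ (4 * m) * ‖w‖ + D + m * D + c₁ * ϱ ^ m / (1 - ϱ) := by
            have := hb1; have := hb2; have := hb3; have := hb4; linarith
  refine htri.trans ?_
  -- final arithmetic
  have hlogm : Real.log 2 ≤ Real.log m := Real.log_le_log two_pos hm2
  have hlog2 : (0.6931471803 : ℝ) < Real.log 2 := Real.log_two_gt_d9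
  have hs1 : 1 ≤ Real.sqrt ((m : ℝ) * Real.log m) := by
    rw [Real.one_le_sqrt]
    nlinarith
  have hcast : (((2 * m : ℕ) : ℝ)) = 2 * (m : ℝ) := by push_cast; ring
  have hsqb : Real.sqrt (((2 * m : ℕ) : ℝ) * Real.log ((2 * m : ℕ) : ℝ))
      ≤ 2 * Real.sqrt ((m : ℝ) * Real.log m) := by
    rw [hcast]
    have h4 : (2 : ℝ) * (m : ℝ) * Real.log (2 * (m : ℝ))
        ≤ 4 * ((m : ℝ) * Real.log m) := by
      rw [Real.log_mul (by norm_num) (by positivity)]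
      nlinarith
    calc Real.sqrt (2 * (m : ℝ) * Real.log (2 * (m : ℝ)))
        ≤ Real.sqrt (4 * ((m : ℝ) * Real.log m)) := Real.sqrt_le_sqrt h4
      _ = 2 * Real.sqrt ((m : ℝ) * Real.log m) := by
          rw [show (4 : ℝ) = 2 ^ 2 by norm_num, Real.sqrt_mul (by positivity),
            Real.sqrt_sq (by norm_num)]
  have hgeo : ((m : ℝ) + 1) * ϱ ^ m ≤ (1 - ϱ)⁻¹ := by
    have h1 : ((m : ℝ) + 1) * ϱ ^ m = ∑ k ∈ Finset.range (m + 1), ϱ ^ m := by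
      rw [Finset.sum_const, Finset.card_range, nsmul_eq_mul]; push_cast; ring
    have h2 : (∑ k ∈ Finset.range (m + 1), ϱ ^ m) ≤ ∑ k ∈ Finset.range (m + 1), ϱ ^ k := by
      apply Finset.sum_le_sum
      intro k hk
      exact pow_le_pow_of_le_one hϱ₀.le hϱ₁.le (by simp at hk; omega)
    have h3 : (∑ k ∈ Finset.range (m + 1), ϱ ^ k) ≤ (1 - ϱ)⁻¹ := by
      rw [geom_sum_eq (by linarith : ϱ ≠ 1), inv_eq_one_div,
        show (ϱ ^ (m + 1) - 1) / (ϱ - 1) = (1 - ϱ ^ (m + 1)) / (1 - ϱ) by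
          rw [div_eq_div_iff (by linarith) (by linarith)]; ring]
      gcongr <;> nlinarith [pow_nonneg hϱ₀.le (m + 1)]
    linarith
  set s : ℝ := Real.sqrt ((m : ℝ) * Real.log m) with hs
  have hs0 : 0 ≤ s := Real.sqrt_nonneg _
  have hPP : ϱ ^ (2 * m) = ϱ ^ m * ϱ ^ m := by rw [two_mul, pow_add]
  have hP0 : 0 < ϱ ^ m := pow_pos hϱ₀ m
  have hDb : D ≤ c₃ * (2 * s) * (ϱ ^ m * ϱ ^ m) := by
    rw [hD, hPP]
    apply mul_le_mul_of_nonneg_right ?_ (by positivity)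
    exact mul_le_mul_of_nonneg_left hsqb hc₃
  have hA : D + (m : ℝ) * D ≤ 2 * c₃ * s * ϱ ^ m * (1 - ϱ)⁻¹ := by
    calc D + (m : ℝ) * D = ((m : ℝ) + 1) * D := by ring
      _ ≤ ((m : ℝ) + 1) * (c₃ * (2 * s) * (ϱ ^ m * ϱ ^ m)) :=
          mul_le_mul_of_nonneg_left hDb (by positivity)
      _ = (2 * c₃ * s * ϱ ^ m) * (((m : ℝ) + 1) * ϱ ^ m) := by ring
      _ ≤ (2 * c₃ * s * ϱ ^ m) * (1 - ϱ)⁻¹ :=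
          mul_le_mul_of_nonneg_left hgeo (by positivity)
      _ = 2 * c₃ * s * ϱ ^ m * (1 - ϱ)⁻¹ := by ring
  have hB : c₁ * ϱ ^ m / (1 - ϱ) ≤ c₁ * s * ϱ ^ m * (1 - ϱ)⁻¹ := by
    rw [div_eq_mul_inv]
    calc c₁ * ϱ ^ m * (1 - ϱ)⁻¹ = c₁ * 1 * ϱ ^ m * (1 - ϱ)⁻¹ := by ring
      _ ≤ c₁ * s * ϱ ^ m * (1 - ϱ)⁻¹ := by
          apply mul_le_mul_of_nonneg_right ?_ (by positivity)
          apply mul_le_mul_of_nonneg_right ?_ hP0.le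
          exact mul_le_mul_of_nonneg_left hs1 hc₁
  have heq : (2 * c₃ + c₁) / (1 - ϱ) * s * ϱ ^ m
      = 2 * c₃ * s * ϱ ^ m * (1 - ϱ)⁻¹ + c₁ * s * ϱ ^ m * (1 - ϱ)⁻¹ := by
    rw [div_eq_mul_inv]; ring
  have heq2 : c₂ * ϱ ^ (4 * m) * ‖w‖ = c₂ * ‖w‖ * ϱ ^ (4 * m) := by
    ring
  linarith
end

section
/- (Lemma 1.1.) For every integer n ≥ 0 there exists a unique polynomial G_n such that z·(Φ(z)^n·Φ'(z) − G_n(z)) → 0 as z → ∞; this G_n has exact degree n with leading coefficient γ^{n+1}; and the function H_n(z) := Φ(z)^n·Φ'(z) − G_n(z) is analytic and square-integrable in Ω, i.e. ∫_Ω |H_n(z)|² dA(z) < ∞, where dA is two-dimensional Lebesgue (area) measure on ℂ. -/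
open MeasureTheory Polynomial Filter Metric Set Function Bornology Topology
set_option maxHeartbeats 1600000

lemma aux_dslope_key (g : ℂ → ℂ) (w : ℂ) : g w = g 0 + w * dslope g 0 w := by
  rcases eq_or_ne w 0 with rfl | h
  · simp
  · rw [dslope_of_ne _ h, slope_def_field]
    field_simp
    ring

lemma aux_taylor_dslope (m : ℕ) : ∀ (f : ℂ → ℂ) (w : ℂ),
    f w = (∑ k ∈ Finset.range m, ((Function.swap dslope 0)^[k] f 0) * w ^ k)
      + w ^ m * ((Function.swap dslope 0)^[m] f w) := by
  induction m with
  | zero => intro f w; simp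
  | succ m ih =>
    intro f w
    rw [aux_dslope_key f w, ih (dslope f 0) w, Finset.sum_range_succ']
    simp only [Function.iterate_succ_apply, Function.swap, mul_add, Finset.mul_sum]
    rw [Finset.sum_congr rfl (g := fun k => (Function.swap dslope 0)^[k] (dslope f 0) 0 * w ^ (k+1))
      (fun k _ => by ring)]
    simp only [Function.swap, pow_zero, Function.iterate_zero_apply]
    ring

lemma aux_dslope_analytic {f : ℂ → ℂ} {r : ℝ} (hf : AnalyticOnNhd ℂ f (ball (0:ℂ) r)) :
    AnalyticOnNhd ℂ (dslope f 0) (ball (0:ℂ) r) := by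
  intro w hw
  rcases eq_or_ne w 0 with rfl | hne
  · obtain ⟨p, hp⟩ := hf 0 hw
    exact (hp.has_fpower_series_dslope_fslope).analyticAt
  · have h1 : AnalyticAt ℂ (fun z => z⁻¹ * (f z - f 0)) w :=
      (analyticAt_id.inv hne).mul ((hf w hw).sub analyticAt_const)
    apply h1.congr
    filter_upwards [compl_singleton_mem_nhds hne] with z hz
    rw [dslope_of_ne _ hz, slope_def_field]
    field_simp [sub_ne_zero.mpr hz]
    simp

lemma aux_iter_dslope_analytic {f : ℂ → ℂ} {r : ℝ} (hf : AnalyticOnNhd ℂ f (ball (0:ℂ) r))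
    (m : ℕ) : AnalyticOnNhd ℂ ((Function.swap dslope 0)^[m] f) (ball (0:ℂ) r) := by
  induction m with
  | zero => simpa using hf
  | succ m ih => rw [Function.iterate_succ_apply']; exact aux_dslope_analytic ih

lemma aux_inv_tendsto_cobounded : Tendsto (fun w : ℂ => w⁻¹) (𝓝[≠] (0:ℂ)) (cobounded ℂ) := by
  rw [← comap_norm_atTop]
  rw [tendsto_comap_iff]
  have h1 : Tendsto (fun w : ℂ => ‖w‖) (𝓝[≠] (0:ℂ)) (𝓝[>] 0) := by
    apply tendsto_nhdsWithin_of_tendsto_nhds_of_eventually_within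
    · simpa using (continuous_norm.tendsto (0:ℂ)).mono_left nhdsWithin_le_nhds
    · filter_upwards [self_mem_nhdsWithin] with w hw
      exact norm_pos_iff.mpr hw
  have := tendsto_inv_nhdsGT_zero.comp h1
  apply this.congr
  intro w; simp [Function.comp]

lemma aux_psi (R0 : ℝ) (hR0 : 0 < R0) (Ω : Set ℂ) (Φ : ℂ → ℂ) (γ : ℝ)
    (hsub : ∀ z : ℂ, R0 ≤ ‖z‖ → z ∈ Ω)
    (hΦa : AnalyticOnNhd ℂ Φ Ω)
    (hΦinf : Tendsto (fun z : ℂ => Φ z / z) (Bornology.cobounded ℂ) (nhds (γ : ℂ))) :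
    ∃ Ψ : ℂ → ℂ, AnalyticOnNhd ℂ Ψ (ball (0:ℂ) R0⁻¹) ∧ Ψ 0 = (γ:ℂ) ∧
      ∀ w : ℂ, w ≠ 0 → Ψ w = w * Φ w⁻¹ := by
  set r := R0⁻¹ with hr
  have hrpos : 0 < r := inv_pos.mpr hR0
  set Ψ : ℂ → ℂ := Function.update (fun w => w * Φ w⁻¹) 0 (γ:ℂ) with hΨ
  have hne : ∀ w : ℂ, w ≠ 0 → Ψ w = w * Φ w⁻¹ := fun w hw => Function.update_of_ne hw _ _
  have hmem : ∀ w : ℂ, w ≠ 0 → ‖w‖ < r → w⁻¹ ∈ Ω := by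
    intro w hw0 hwr
    apply hsub
    rw [norm_inv]
    have hwpos : 0 < ‖w‖ := norm_pos_iff.mpr hw0
    calc R0 = r⁻¹ := by rw [hr, inv_inv]
    _ ≤ ‖w‖⁻¹ := inv_anti₀ hwpos hwr.le
  have hcont : ContinuousAt Ψ 0 := by
    rw [← continuousWithinAt_compl_self]
    have h0 : Ψ 0 = (γ:ℂ) := Function.update_self _ _ _
    unfold ContinuousWithinAt
    rw [h0]
    have h1 : Tendsto (fun w : ℂ => Φ w⁻¹ / w⁻¹) (𝓝[≠] (0:ℂ)) (𝓝 (γ:ℂ)) :=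
      hΦinf.comp aux_inv_tendsto_cobounded
    apply h1.congr'
    filter_upwards [self_mem_nhdsWithin] with w hw
    rw [hne w hw, div_eq_mul_inv, inv_inv, mul_comm]
  have hdiff : DifferentiableOn ℂ Ψ (ball (0:ℂ) r) := by
    apply (Complex.differentiableOn_compl_singleton_and_continuousAt_iff
      (ball_mem_nhds (0:ℂ) hrpos)).mp
    constructor
    · intro w hw
      obtain ⟨hwb, hw0'⟩ := hw
      have hw0 : w ≠ 0 := hw0'
      have hd : DifferentiableAt ℂ (fun w : ℂ => w * Φ w⁻¹) w := by
        apply differentiableAt_id.mul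
        exact ((hΦa _ (hmem w hw0 (by simpa using hwb))).differentiableAt).comp w
          (differentiableAt_inv hw0)
      apply (hd.congr_of_eventuallyEq ?_).differentiableWithinAt
      filter_upwards [compl_singleton_mem_nhds hw0] with z hz
      exact hne z hz
    · exact hcont
  exact ⟨Ψ, hdiff.analyticOnNhd isOpen_ball, Function.update_self _ _ _, hne⟩

lemma aux_phi_bounded (R0 R1 : ℝ) (hR0 : 0 < R0) (hR01 : R0 < R1)
    (Ω : Set ℂ) (Φ : ℂ → ℂ) (γ : ℝ) (hγ : 0 < γ)
    (hsub : ∀ z : ℂ, R0 ≤ ‖z‖ → z ∈ Ω)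
    (hΦi : Set.InjOn Φ Ω)
    (hΦim : Φ '' Ω = {w : ℂ | 1 < ‖w‖})
    (Ψ : ℂ → ℂ) (hΨa : AnalyticOnNhd ℂ Ψ (ball (0:ℂ) R0⁻¹)) (hΨ0 : Ψ 0 = (γ:ℂ))
    (hΨne : ∀ w : ℂ, w ≠ 0 → Ψ w = w * Φ w⁻¹) :
    ∃ M : ℝ, 0 < M ∧ ∀ z ∈ Ω, ‖z‖ < R1 → ‖Φ z‖ ≤ M := by
  have hrpos : (0:ℝ) < R0⁻¹ := inv_pos.mpr hR0
  have h0mem : (0:ℂ) ∈ ball (0:ℂ) R0⁻¹ := mem_ball_self hrpos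
  have hγC : (γ:ℂ) ≠ 0 := Complex.ofReal_ne_zero.mpr hγ.ne'
  have habs : ∀ z ∈ Ω, 1 < ‖Φ z‖ := by
    intro z hz
    have : Φ z ∈ Φ '' Ω := Set.mem_image_of_mem _ hz
    rw [hΦim] at this
    exact this
  have hΦne : ∀ z ∈ Ω, Φ z ≠ 0 := by
    intro z hz h
    have := habs z hz
    rw [h] at this; simp at this; linarith
  set η : ℂ → ℂ := fun w => w / Ψ w with hη
  have hΨ0ne : Ψ 0 ≠ 0 := by rw [hΨ0]; exact hγC
  have hηa : AnalyticAt ℂ η 0 := (analyticAt_id).div (hΨa 0 h0mem) hΨ0ne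
  have hΨd : HasDerivAt Ψ (deriv Ψ 0) 0 := ((hΨa 0 h0mem).differentiableAt).hasDerivAt
  set d : ℂ := ((1:ℂ) * Ψ 0 - 0 * deriv Ψ 0) / Ψ 0 ^ 2 with hd
  have hηd : HasDerivAt η d 0 := (hasDerivAt_id 0).div hΨd hΨ0ne
  have hdne : d ≠ 0 := by
    rw [hd, hΨ0]
    field_simp
    simp [hγ.ne']
  have hstrict : HasStrictDerivAt η d 0 := by
    obtain ⟨p, hp⟩ := hηa
    have h1 := hp.hasStrictDerivAt
    have h2 : (p 1 fun _ => 1) = d := h1.hasDerivAt.unique hηd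
    rwa [h2] at h1
  have hη0 : η 0 = 0 := by simp [hη]
  have hmap : map η (𝓝 0) = 𝓝 (0:ℂ) := by rw [hstrict.map_nhds_eq hdne, hη0]
  have hδpos : (0:ℝ) < R1⁻¹ := inv_pos.mpr (hR0.trans hR01)
  have himg : η '' (ball 0 R1⁻¹) ∈ 𝓝 (0:ℂ) := by
    rw [← hmap]
    exact image_mem_map (ball_mem_nhds _ hδpos)
  obtain ⟨ε, hεpos, hball⟩ := Metric.mem_nhds_iff.mp himg
  refine ⟨ε⁻¹, inv_pos.mpr hεpos, ?_⟩
  intro z hz hzR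
  by_contra hcon
  push_neg at hcon
  have hΦz : Φ z ≠ 0 := hΦne z hz
  have hu : (Φ z)⁻¹ ∈ ball (0:ℂ) ε := by
    rw [mem_ball_zero_iff, norm_inv]
    calc ‖Φ z‖⁻¹ < (ε⁻¹)⁻¹ := by
          apply inv_strictAnti₀ (inv_pos.mpr hεpos) hcon
    _ = ε := inv_inv ε
  obtain ⟨w, hwball, hwu⟩ := hball hu
  rw [mem_ball_zero_iff] at hwball
  have hw0 : w ≠ 0 := by
    rintro rfl
    rw [hη0] at hwu
    exact inv_ne_zero hΦz hwu.symm
  have hwinv_norm : R1 < ‖w⁻¹‖ := by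
    rw [norm_inv]
    calc R1 = (R1⁻¹)⁻¹ := (inv_inv R1).symm
    _ < ‖w‖⁻¹ := inv_strictAnti₀ (norm_pos_iff.mpr hw0) hwball
  have hwinv : w⁻¹ ∈ Ω := hsub _ (le_of_lt (hR01.trans hwinv_norm))
  have hΦw : Φ w⁻¹ ≠ 0 := hΦne _ hwinv
  have hηw : η w = (Φ w⁻¹)⁻¹ := by
    rw [hη]
    simp only
    rw [hΨne w hw0, div_mul_cancel_left₀ hw0]
  have heq : Φ w⁻¹ = Φ z := by
    have : (Φ w⁻¹)⁻¹ = (Φ z)⁻¹ := by rw [← hηw, hwu]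
    exact inv_injective this
  have := hΦi hwinv hz heq
  rw [this] at hwinv_norm
  linarith

lemma aux_det (c : ℂ) :
    (((1 : ℂ →L[ℂ] ℂ).smulRight c).restrictScalars ℝ).det = Complex.normSq c := by
  have h1 : ((((1 : ℂ →L[ℂ] ℂ).smulRight c).restrictScalars ℝ : ℂ →L[ℝ] ℂ) : ℂ →ₗ[ℝ] ℂ)
      = (Algebra.lmul ℝ ℂ) c := by
    apply LinearMap.ext
    intro z
    simp [mul_comm]
  rw [ContinuousLinearMap.det, h1, ← Algebra.norm_apply, Algebra.norm_complex_apply]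
/-- Lemma 1.1: for every `n ≥ 0` there is a unique polynomial `G_n` with
`z·(Φ(z)^n·Φ'(z) − G_n(z)) → 0` as `z → ∞`; it has exact degree `n` with leading
coefficient `γ^{n+1}`, and `H_n := Φ^n·Φ' − G_n` is analytic and square-integrable on `Ω`. -/
theorem faber_second_kind_remainder
    (G : Set ℂ) (hG : G.Nonempty) (hGo : IsOpen G) (hGb : Bornology.IsBounded G)
    (hGc : IsConnected G)
    (Ω : Set ℂ) (hΩ : Ω = (closure G)ᶜ)
    (Φ : ℂ → ℂ) (γ : ℝ) (hγ : 0 < γ)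
    (hΦa : AnalyticOnNhd ℂ Φ Ω)
    (hΦi : Set.InjOn Φ Ω)
    (hΦim : Φ '' Ω = {w : ℂ | 1 < ‖w‖})
    (hΦinf : Tendsto (fun z : ℂ => Φ z / z) (Bornology.cobounded ℂ) (nhds (γ : ℂ)))
    (n : ℕ) :
    ∃ Gn : Polynomial ℂ,
      Tendsto (fun z : ℂ => z * (Φ z ^ n * deriv Φ z - Gn.eval z))
        (Bornology.cobounded ℂ) (nhds 0) ∧
      (∀ Q : Polynomial ℂ,
        Tendsto (fun z : ℂ => z * (Φ z ^ n * deriv Φ z - Q.eval z))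
          (Bornology.cobounded ℂ) (nhds 0) → Q = Gn) ∧
      Gn.degree = n ∧
      Gn.coeff n = (γ : ℂ) ^ (n + 1) ∧
      AnalyticOnNhd ℂ (fun z : ℂ => Φ z ^ n * deriv Φ z - Gn.eval z) Ω ∧
      IntegrableOn (fun z : ℂ => ‖Φ z ^ n * deriv Φ z - Gn.eval z‖ ^ 2) Ω := by
  -- basic setup
  obtain ⟨R0, hR0, hGR0⟩ := (hGb.closure).subset_ball_lt 0 0
  have hΩo : IsOpen Ω := by rw [hΩ]; exact isClosed_closure.isOpen_compl
  have hsub : ∀ z : ℂ, R0 ≤ ‖z‖ → z ∈ Ω := by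
    intro z hz
    rw [hΩ, Set.mem_compl_iff]
    intro hmem
    have := hGR0 hmem
    rw [mem_ball, dist_zero_right] at this
    linarith
  have hrpos : (0:ℝ) < R0⁻¹ := inv_pos.mpr hR0
  obtain ⟨Ψ, hΨa, hΨ0, hΨne⟩ := aux_psi R0 hR0 Ω Φ γ hsub hΦa hΦinf
  have hγC : (γ:ℂ) ≠ 0 := Complex.ofReal_ne_zero.mpr hγ.ne'
  -- Φ in terms of Ψ
  have hnz : ∀ z : ℂ, R0 < ‖z‖ → z ≠ 0 := by
    intro z hz h; rw [h] at hz; simp at hz; linarith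
  have hmemball : ∀ z : ℂ, R0 < ‖z‖ → z⁻¹ ∈ ball (0:ℂ) R0⁻¹ := by
    intro z hz
    rw [mem_ball_zero_iff, norm_inv]
    calc ‖z‖⁻¹ < R0⁻¹ := inv_strictAnti₀ hR0 hz
    _ ≤ R0⁻¹ := le_refl _
  have hΦz_eq : ∀ z : ℂ, R0 < ‖z‖ → Φ z = z * Ψ z⁻¹ := by
    intro z hz
    have hz0 := hnz z hz
    rw [hΨne z⁻¹ (inv_ne_zero hz0), inv_inv, ← mul_assoc, mul_inv_cancel₀ hz0, one_mul]
  -- power series data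
  set F : ℂ → ℂ := fun w => Ψ w ^ (n+1) with hF
  have hFa : AnalyticOnNhd ℂ F (ball (0:ℂ) R0⁻¹) := fun w hw => (hΨa w hw).pow _
  set c : ℕ → ℂ := fun k => (Function.swap dslope 0)^[k] F 0 with hc
  set g : ℂ → ℂ := (Function.swap dslope 0)^[n+2] F with hg
  have hga : AnalyticOnNhd ℂ g (ball (0:ℂ) R0⁻¹) := aux_iter_dslope_analytic hFa (n+2)
  set v : ℂ → ℂ := fun w => w * g w with hv
  have hva : AnalyticOnNhd ℂ v (ball (0:ℂ) R0⁻¹) := fun w hw => (analyticAt_id).mul (hga w hw)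
  set P : Polynomial ℂ := ∑ k ∈ Finset.range (n+2), C (c k) * X^(n+1-k) with hP
  have hPeval : ∀ z : ℂ, P.eval z = ∑ k ∈ Finset.range (n+2), c k * z^(n+1-k) := by
    intro z; rw [hP]; simp [eval_finset_sum]
  have hkey : ∀ z : ℂ, R0 < ‖z‖ → Φ z ^ (n+1) = P.eval z + v z⁻¹ := by
    intro z hz
    have hz0 := hnz z hz
    rw [hΦz_eq z hz, mul_pow, aux_taylor_dslope (n+2) (fun w => Ψ w ^ (n+1)) z⁻¹, hPeval]
    rw [mul_add, Finset.mul_sum]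
    congr 1
    · apply Finset.sum_congr rfl
      intro k hk
      rw [Finset.mem_range] at hk
      have hkle : k ≤ n + 1 := Nat.lt_succ_iff.mp hk
      rw [pow_sub₀ z hz0 hkle]
      ring
    · show z ^ (n+1) * ((z⁻¹)^(n+2) * g z⁻¹) = z⁻¹ * g z⁻¹
      have : z ^ (n+1) * (z⁻¹)^(n+2) = z⁻¹ := by
        rw [pow_succ (z⁻¹) (n+1), ← mul_assoc, ← mul_pow, mul_inv_cancel₀ hz0, one_pow, one_mul]
      rw [← mul_assoc, this]
  set N : ℂ := (n : ℂ) + 1 with hN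
  have hNne : N ≠ 0 := by rw [hN]; exact Nat.cast_add_one_ne_zero n
  set Gn : Polynomial ℂ := C N⁻¹ * derivative P with hGn
  have hGneval : ∀ z : ℂ, Gn.eval z = N⁻¹ * (derivative P).eval z := by
    intro z; rw [hGn]; simp
  have hU : IsOpen {z : ℂ | R0 < ‖z‖} := isOpen_lt continuous_const continuous_norm
  -- main pointwise formula for the remainder
  have hHform : ∀ z : ℂ, R0 < ‖z‖ →
      Φ z ^ n * deriv Φ z - Gn.eval z = -(N⁻¹ * (deriv v z⁻¹ * (z^2)⁻¹)) := by
    intro z hz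
    have hz0 := hnz z hz
    have hzΩ : z ∈ Ω := hsub z hz.le
    have hΦd : HasDerivAt Φ (deriv Φ z) z := (hΦa z hzΩ).differentiableAt.hasDerivAt
    have h1 : HasDerivAt (fun z => Φ z ^ (n+1)) (N * Φ z ^ n * deriv Φ z) z := by
      have := hΦd.pow (n+1)
      refine this.congr_deriv ?_
      simp [hN]
    have hvd : HasDerivAt v (deriv v z⁻¹) z⁻¹ :=
      (hva _ (hmemball z hz)).differentiableAt.hasDerivAt
    have hinvd : HasDerivAt (fun z : ℂ => z⁻¹) (-(z^2)⁻¹) z := hasDerivAt_inv hz0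
    have h2 : HasDerivAt (fun z : ℂ => v z⁻¹) (deriv v z⁻¹ * -(z^2)⁻¹) z := hvd.comp z hinvd
    have h3 : HasDerivAt (fun z : ℂ => P.eval z + v z⁻¹)
        ((derivative P).eval z + deriv v z⁻¹ * -(z^2)⁻¹) z := (P.hasDerivAt z).add h2
    have h4 : HasDerivAt (fun z : ℂ => P.eval z + v z⁻¹) (N * Φ z ^ n * deriv Φ z) z := by
      apply h1.congr_of_eventuallyEq
      filter_upwards [hU.mem_nhds hz] with y hy
      exact (hkey y hy).symm
    have h5 := h4.unique h3
    rw [hGneval]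
    have h6 : Φ z ^ n * deriv Φ z
        = N⁻¹ * ((derivative P).eval z + deriv v z⁻¹ * -(z^2)⁻¹) := by
      rw [← h5]
      field_simp
    rw [h6]
    ring
  have hTail : ∀ᶠ z : ℂ in cobounded ℂ, R0 < ‖z‖ :=
    tendsto_norm_cobounded_atTop.eventually (eventually_gt_atTop R0)
  have hdva : AnalyticOnNhd ℂ (deriv v) (ball (0:ℂ) R0⁻¹) := hva.deriv
  -- the tendsto property
  have htends : Tendsto (fun z : ℂ => z * (Φ z ^ n * deriv Φ z - Gn.eval z))
      (cobounded ℂ) (𝓝 0) := by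
    have hlim : Tendsto (fun z : ℂ => -(N⁻¹ * (deriv v z⁻¹ * z⁻¹))) (cobounded ℂ) (𝓝 0) := by
      have hcont : ContinuousAt (deriv v) 0 := (hdva 0 (mem_ball_self hrpos)).continuousAt
      have h1 : Tendsto (fun z : ℂ => deriv v z⁻¹) (cobounded ℂ) (𝓝 (deriv v 0)) :=
        hcont.tendsto.comp tendsto_inv₀_cobounded
      have h2 := h1.mul tendsto_inv₀_cobounded
      rw [mul_zero] at h2
      have h3 := (h2.const_mul N⁻¹).neg
      simpa using h3
    apply hlim.congr'
    filter_upwards [hTail] with z hz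
    have hz0 := hnz z hz
    rw [hHform z hz]
    field_simp
  -- coefficients
  have hPcoeff : ∀ m : ℕ, P.coeff m
      = ∑ k ∈ Finset.range (n+2), if m = n+1-k then c k else 0 := by
    intro m
    rw [hP, finset_sum_coeff]
    apply Finset.sum_congr rfl
    intro k _
    rw [coeff_C_mul, coeff_X_pow, mul_ite, mul_one, mul_zero]
  have hc0 : c 0 = (γ:ℂ)^(n+1) := by
    simp [hc, hF, hΨ0]
  have hPtop : P.coeff (n+1) = (γ:ℂ)^(n+1) := by
    rw [hPcoeff, Finset.sum_eq_single 0]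
    · rw [if_pos (by omega)]; exact hc0
    · intro k hk hk0
      rw [Finset.mem_range] at hk
      rw [if_neg (by omega)]
    · intro h; exact absurd (Finset.mem_range.mpr (by omega)) h
  have hPhigh : ∀ m : ℕ, n+1 < m → P.coeff m = 0 := by
    intro m hm
    rw [hPcoeff]
    apply Finset.sum_eq_zero
    intro k hk
    rw [if_neg (by omega)]
  have hGcoeff : ∀ m : ℕ, Gn.coeff m = N⁻¹ * (P.coeff (m+1) * (m+1)) := by
    intro m
    rw [hGn, coeff_C_mul, coeff_derivative]
  have hcn : Gn.coeff n = (γ:ℂ)^(n+1) := by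
    rw [hGcoeff, hPtop]
    have h1 : ((n:ℂ)+1) ≠ 0 := hNne
    rw [mul_comm ((γ:ℂ)^(n+1)) _, ← mul_assoc]
    push_cast
    rw [inv_mul_cancel₀ h1, one_mul]
  have hHa : AnalyticOnNhd ℂ (fun z : ℂ => Φ z ^ n * deriv Φ z - Gn.eval z) Ω := fun z hz =>
    (((hΦa z hz).pow n).mul (hΦa.deriv z hz)).sub (Gn.differentiable.analyticAt z)
  refine ⟨Gn, htends, ?_, ?_, ?_, ?_, ?_⟩
  · -- uniqueness
    intro Q hQ
    have hsub2 : Tendsto (fun z : ℂ => z * (Gn.eval z - Q.eval z)) (cobounded ℂ) (𝓝 0) := by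
      have := hQ.sub htends
      simp only [sub_zero] at this ⊢
      apply this.congr
      intro z
      ring
    have hD : Tendsto (fun z : ℂ => (Gn - Q).eval z) (cobounded ℂ) (𝓝 0) := by
      have h1 := hsub2.mul tendsto_inv₀_cobounded
      rw [mul_zero] at h1
      apply h1.congr'
      filter_upwards [hTail] with z hz
      have hz0 := hnz z hz
      rw [eval_sub]
      field_simp
    have hblt : ∀ᶠ z : ℂ in cobounded ℂ, ‖(Gn - Q).eval z‖ ≤ 1 := by
      have := hD.norm
      rw [norm_zero] at this
      exact this.eventually_le_const one_pos
    rw [← comap_norm_atTop, eventually_comap, eventually_atTop] at hblt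
    obtain ⟨A, hA⟩ := hblt
    obtain ⟨B, hB⟩ := (isCompact_closedBall (0:ℂ) A).exists_bound_of_continuousOn
      ((Gn - Q).continuous.continuousOn)
    have hbdd : ∀ z : ℂ, ‖(Gn - Q).eval z‖ ≤ max 1 B := by
      intro z
      rcases le_or_gt ‖z‖ A with h | h
      · exact le_trans (hB z (by simpa [mem_closedBall, dist_zero_right] using h))
          (le_max_right _ _)
      · exact le_trans (hA ‖z‖ h.le z rfl) (le_max_left _ _)
    have hrange : IsBounded (Set.range fun z : ℂ => (Gn - Q).eval z) := by
      apply isBounded_iff_forall_norm_le.mpr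
      exact ⟨max 1 B, by rintro x ⟨z, rfl⟩; exact hbdd z⟩
    have hconst := (Gn - Q).differentiable.apply_eq_apply_of_bounded hrange
    have hzero : ∀ z : ℂ, (Gn - Q).eval z = 0 := by
      intro z
      apply tendsto_nhds_unique (l := cobounded ℂ) ?_ hD
      have heq : (fun w : ℂ => (Gn - Q).eval w) = fun _ => (Gn - Q).eval z :=
        funext fun w => hconst w z
      rw [heq]
      exact tendsto_const_nhds
    have h0 : Gn - Q = 0 := Polynomial.funext fun z => by rw [hzero z, eval_zero]
    exact (sub_eq_zero.mp h0).symm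
  · -- degree
    apply degree_eq_of_le_of_coeff_ne_zero
    · rw [degree_le_iff_coeff_zero]
      intro m hm
      have hm' : n < m := by exact_mod_cast hm
      rw [hGcoeff, hPhigh (m+1) (by omega), zero_mul, mul_zero]
    · rw [hcn]; exact pow_ne_zero _ hγC
  · exact hcn
  · exact hHa
  · -- integrability
    have hfc : ContinuousOn (fun z => ‖(fun z : ℂ => Φ z ^ n * deriv Φ z - Gn.eval z) z‖ ^ 2) Ω := by
      apply ContinuousOn.pow
      exact continuous_norm.comp_continuousOn hHa.continuousOn
    set R1 : ℝ := max (2*R0) 1 with hR1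
    have hR01 : R0 < R1 := lt_of_lt_of_le (by linarith) (le_max_left _ _)
    have hR11 : (1:ℝ) ≤ R1 := le_max_right _ _
    have hR1pos : (0:ℝ) < R1 := lt_of_lt_of_le one_pos hR11
    obtain ⟨M, hMpos, hMb⟩ := aux_phi_bounded R0 R1 hR0 hR01 Ω Φ γ hγ hsub hΦi hΦim Ψ hΨa hΨ0 hΨne
    set s : Set ℂ := Ω ∩ ball 0 R1 with hs
    set S : Set ℂ := {z : ℂ | R1 ≤ ‖z‖} with hSdef
    have hcover : Ω ⊆ s ∪ S := by
      intro z hz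
      rcases lt_or_ge ‖z‖ R1 with h | h
      · exact Or.inl ⟨hz, by rwa [mem_ball, dist_zero_right]⟩
      · exact Or.inr h
    have hSsub : S ⊆ Ω := fun z hz => hsub z (le_trans hR01.le hz)
    have hSmeas : MeasurableSet S := (isClosed_le continuous_const continuous_norm).measurableSet
    have hsmeas : MeasurableSet s := (hΩo.inter isOpen_ball).measurableSet
    -- outer part
    have hcball : closedBall (0:ℂ) R1⁻¹ ⊆ ball (0:ℂ) R0⁻¹ := by
      intro x hx
      rw [mem_closedBall, dist_zero_right] at hx
      rw [mem_ball, dist_zero_right]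
      exact lt_of_le_of_lt hx (inv_strictAnti₀ hR0 hR01)
    obtain ⟨Cv, hCv⟩ := (isCompact_closedBall (0:ℂ) R1⁻¹).exists_bound_of_continuousOn
      (hdva.continuousOn.mono hcball)
    have hCv0 : 0 ≤ Cv :=
      le_trans (norm_nonneg _) (hCv 0 (mem_closedBall_self (by positivity)))
    have hN1 : (1:ℝ) ≤ ‖N‖ := by
      have : N = ((n+1 : ℕ) : ℂ) := by rw [hN]; push_cast; ring
      rw [this, Complex.norm_natCast]
      exact_mod_cast Nat.one_le_iff_ne_zero.mpr (Nat.succ_ne_zero n)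
    have houter : ∀ z ∈ S, ‖Φ z ^ n * deriv Φ z - Gn.eval z‖ ^ 2
        ≤ 16*Cv^2 * ((1+‖z‖) ^ (-(4:ℝ))) := by
      intro z hz
      have hzS : R1 ≤ ‖z‖ := hz
      have hzR0 : R0 < ‖z‖ := lt_of_lt_of_le hR01 hzS
      have hz0 := hnz z hzR0
      have hz1 : (1:ℝ) ≤ ‖z‖ := le_trans hR11 hzS
      have hinv : z⁻¹ ∈ closedBall (0:ℂ) R1⁻¹ := by
        rw [mem_closedBall, dist_zero_right, norm_inv]
        exact inv_anti₀ hR1pos hzS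
      have hb1 : ‖Φ z ^ n * deriv Φ z - Gn.eval z‖ ≤ Cv * (‖z‖^2)⁻¹ := by
        rw [hHform z hzR0, norm_neg, norm_mul, norm_mul, norm_inv, norm_inv, norm_pow]
        calc ‖N‖⁻¹ * (‖deriv v z⁻¹‖ * (‖z‖^2)⁻¹) ≤ 1 * (Cv * (‖z‖^2)⁻¹) := by
              gcongr
              · exact inv_le_one_of_one_le₀ hN1
              · exact hCv _ hinv
        _ = Cv * (‖z‖^2)⁻¹ := one_mul _
      have habs : ‖Φ z ^ n * deriv Φ z - Gn.eval z‖
          = ‖Φ z ^ n * deriv Φ z - Gn.eval z‖ := rfl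
      have hb2 : ‖Φ z ^ n * deriv Φ z - Gn.eval z‖ ^ 2 ≤ (Cv * (‖z‖^2)⁻¹)^2 := by
        rw [habs]
        exact pow_le_pow_left₀ (norm_nonneg _) hb1 2
      have hr4 : ((1:ℝ)+‖z‖) ^ (-(4:ℝ)) = (((1+‖z‖)^(4:ℕ))⁻¹ : ℝ) := by
        rw [Real.rpow_neg (by positivity), ← Real.rpow_natCast (1+‖z‖) 4]
        norm_num
      rw [hr4]
      have h16 : ((1:ℝ)+‖z‖)^(4:ℕ) ≤ 16 * (‖z‖^2)^2 := by
        have h15 : (1:ℝ)+‖z‖ ≤ 2*‖z‖ := by linarith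
        calc ((1:ℝ)+‖z‖)^(4:ℕ) ≤ (2*‖z‖)^(4:ℕ) := pow_le_pow_left₀ (by positivity) h15 4
        _ = 16 * (‖z‖^2)^2 := by ring
      have hinvle : (((1:ℝ)+‖z‖)^(4:ℕ))⁻¹ ≥ (16 * (‖z‖^2)^2)⁻¹ :=
        inv_anti₀ (by positivity) h16
      calc ‖Φ z ^ n * deriv Φ z - Gn.eval z‖ ^ 2 ≤ (Cv * (‖z‖^2)⁻¹)^2 := hb2
      _ = Cv^2 * ((‖z‖^2)^2)⁻¹ := by rw [mul_pow, inv_pow]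
      _ = 16*Cv^2 * (16 * (‖z‖^2)^2)⁻¹ := by
          rw [mul_inv]
          ring
      _ ≤ 16*Cv^2 * (((1:ℝ)+‖z‖)^(4:ℕ))⁻¹ := by gcongr
    have hIS : IntegrableOn
        (fun z => ‖Φ z ^ n * deriv Φ z - Gn.eval z‖ ^ 2) S := by
      have hint : Integrable (fun z : ℂ => 16*Cv^2 * ((1+‖z‖) ^ (-(4:ℝ)))) := by
        apply Integrable.const_mul
        apply integrable_one_add_norm
        rw [Complex.finrank_real_complex]; norm_num
      apply Integrable.mono' hint.integrableOn
      · exact (hfc.mono hSsub).aestronglyMeasurable hSmeas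
      · rw [ae_restrict_iff' hSmeas]
        filter_upwards with z hz
        rw [Real.norm_eq_abs, abs_of_nonneg (by positivity)]
        exact houter z hz
    -- inner part
    have hf' : ∀ x ∈ s, HasFDerivWithinAt Φ
        (((1 : ℂ →L[ℂ] ℂ).smulRight (deriv Φ x)).restrictScalars ℝ) s x := fun x hx =>
      (((hΦa x hx.1).differentiableAt.hasDerivAt.hasFDerivAt).restrictScalars ℝ).hasFDerivWithinAt
    have hkey2 := lintegral_image_eq_lintegral_abs_det_fderiv_mul volume hsmeas hf'
      (hΦi.mono inter_subset_left) (fun _ => (1:ENNReal))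
    rw [setLIntegral_one] at hkey2
    have hdetx : ∀ x : ℂ, ENNReal.ofReal
        |(((1 : ℂ →L[ℂ] ℂ).smulRight (deriv Φ x)).restrictScalars ℝ).det| * (1:ENNReal)
        = ENNReal.ofReal (‖deriv Φ x‖ ^ 2) := by
      intro x
      rw [aux_det, abs_of_nonneg (Complex.normSq_nonneg _), mul_one, ← Complex.sq_norm]
    rw [lintegral_congr hdetx] at hkey2
    have himgsub : Φ '' s ⊆ closedBall (0:ℂ) M := by
      rintro _ ⟨z, hzs, rfl⟩
      rw [mem_closedBall, dist_zero_right]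
      exact hMb z hzs.1 (by simpa [mem_ball, dist_zero_right] using hzs.2)
    have hvol : volume (Φ '' s) < ⊤ :=
      lt_of_le_of_lt (measure_mono himgsub) measure_closedBall_lt_top
    rw [hkey2] at hvol
    have hint1 : IntegrableOn (fun z => ‖deriv Φ z‖ ^ 2) s := by
      constructor
      · exact ((continuous_norm.comp_continuousOn
          ((hΦa.deriv.continuousOn).mono inter_subset_left)).pow 2).aestronglyMeasurable hsmeas
      · rw [hasFiniteIntegral_iff_norm]
        apply lt_of_le_of_lt _ hvol
        apply le_of_eq
        apply lintegral_congr
        intro x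
        rw [Real.norm_eq_abs, abs_of_nonneg (by positivity)]
    have hGint : IntegrableOn (fun z => 2*(‖Gn.eval z‖)^2) s := by
      have hc2 : Continuous (fun z : ℂ => 2*(‖Gn.eval z‖)^2) := by
        apply Continuous.mul continuous_const
        exact (continuous_norm.comp Gn.continuous).pow 2
      apply (hc2.continuousOn.integrableOn_compact (isCompact_closedBall (0:ℂ) R1)).mono_set
      exact inter_subset_right.trans ball_subset_closedBall
    have hbound2 : ∀ z ∈ s, ‖Φ z ^ n * deriv Φ z - Gn.eval z‖ ^ 2
        ≤ 2*M^(2*n)*(‖deriv Φ z‖ ^ 2) + 2*(‖Gn.eval z‖)^2 := by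
      intro z hz
      have hΦb : ‖Φ z‖ ≤ M := hMb z hz.1 (by simpa [mem_ball, dist_zero_right] using hz.2)
      set a : ℝ := ‖Φ z ^ n * deriv Φ z‖ with ha
      set b : ℝ := ‖Gn.eval z‖ with hb
      have h1 : ‖Φ z ^ n * deriv Φ z - Gn.eval z‖ ≤ a + b := by
        rw [ha, hb]
        exact norm_sub_le _ _
      have h2 : ‖Φ z ^ n * deriv Φ z - Gn.eval z‖ ^ 2 ≤ (a+b)^2 :=
        pow_le_pow_left₀ (by positivity) h1 2
      have ha2 : a^2 ≤ M^(2*n) * ‖deriv Φ z‖ ^ 2 := by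
        have hstep : ‖Φ z‖ ^ (2*n) ≤ M^(2*n) :=
          pow_le_pow_left₀ (norm_nonneg _) hΦb _
        have haeq : a^2 = ‖Φ z‖ ^ (2*n) * ‖deriv Φ z‖ ^ 2 := by
          rw [ha, norm_mul, norm_pow]; ring
        rw [haeq]
        exact mul_le_mul_of_nonneg_right hstep (by positivity)
      have hb0 : 0 ≤ b := norm_nonneg _
      have ha0 : 0 ≤ a := norm_nonneg _
      nlinarith [sq_nonneg (a-b)]
    have hIs : IntegrableOn
        (fun z => ‖Φ z ^ n * deriv Φ z - Gn.eval z‖ ^ 2) s := by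
      apply Integrable.mono' ((hint1.const_mul (2*M^(2*n))).add hGint)
      · exact (hfc.mono inter_subset_left).aestronglyMeasurable hsmeas
      · rw [ae_restrict_iff' hsmeas]
        filter_upwards with z hz
        rw [Real.norm_eq_abs, abs_of_nonneg (by positivity)]
        exact hbound2 z hz
    exact (hIs.union hIS).mono_set hcover
end
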